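/- arXiv:1601.03131 — 4 statements merged into one kernel-verified Lean document; each statement's English description precedes it below -/
import Mathlib

section
/- Let N ≥ 1 be an integer and m : ZMod N → ℤ a function with m(j) ∈ {−1, 0, 1} for every j and with total sum Σ_{j ∈ ZMod N} m(j) < 0. Then the cardinality of the set {j ∈ ZMod N : m(j) = −1 and Σ_{k=1}^{r} m(j − k) ≤ 0 for every integer r ≥ 1} equals −Σ_{j ∈ ZMod N} m(j). -/
namespace Stmt0Aux

variable (N : ℕ) (m : ZMod N → ℤ)

/-- The walk: partial sums of the lifted step function. -/
def F : ℕ → ℤ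
  | 0 => 0
  | n + 1 => F n + m ((n : ℕ) : ZMod N)

/-- Running minimum of the walk. -/
def Fm : ℕ → ℤ
  | 0 => 0
  | n + 1 => min (Fm n) (F N m (n + 1))

theorem Fm_le : ∀ {n q : ℕ}, q ≤ n → Fm N m n ≤ F N m q := by
  intro n
  induction n with
  | zero =>
      intro q hq
      interval_cases q
      simp [Fm, F]
  | succ n ih =>
      intro q hq
      rcases Nat.lt_or_ge q (n+1) with h | h
      · exact le_trans (min_le_left _ _) (ih (by omega))
      · have : q = n + 1 := by omega
        subst this; exact min_le_right _ _

theorem Fm_exists : ∀ n : ℕ, ∃ q ≤ n, Fm N m n = F N m q := by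
  intro n
  induction n with
  | zero => exact ⟨0, le_refl _, rfl⟩
  | succ n ih =>
      rcases ih with ⟨q, hq, hFq⟩
      rcases le_or_gt (Fm N m n) (F N m (n+1)) with h | h
      · exact ⟨q, by omega, by rw [Fm, min_eq_left h]; exact hFq⟩
      · exact ⟨n+1, le_refl _, by simp [Fm, min_eq_right h.le]⟩


/-- predicate: `p` is a strict record minimum of the walk -/
def Rec (p : ℕ) : Prop := ∀ q < p, F N m p < F N m q

instance : DecidablePred (Rec N m) := fun _ => Nat.decidableBallLT _ _

/-- number of records among `0, 1, ..., n` -/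
def cnt (n : ℕ) : ℕ := ((Finset.range (n + 1)).filter (Rec N m)).card

theorem rec_iff (n : ℕ) : Rec N m (n + 1) ↔ F N m (n + 1) < Fm N m n := by
  constructor
  · intro h
    rcases Fm_exists N m n with ⟨q, hq, hFq⟩
    rw [hFq]
    exact h q (by omega)
  · intro h q hq
    exact lt_of_lt_of_le h (Fm_le N m (by omega))

theorem cnt_eq (hm : ∀ j, m j = -1 ∨ m j = 0 ∨ m j = 1) :
    ∀ n : ℕ, (cnt N m n : ℤ) = 1 - Fm N m n := by
  intro n
  induction n with
  | zero =>
      have : (Finset.range 1).filter (Rec N m) = {0} := by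
        rw [Finset.range_one, Finset.filter_singleton, if_pos]
        intro q hq; omega
      simp only [cnt, Fm, this, Finset.card_singleton, Nat.cast_one]; norm_num
  | succ n ih =>
      have hstep : F N m n - 1 ≤ F N m (n + 1) := by
        have := hm ((n : ℕ) : ZMod N)
        rw [F]
        omega
      have hsplit : (Finset.range (n + 2)).filter (Rec N m)
          = insert (n + 1) ((Finset.range (n + 1)).filter (Rec N m))
            ∨ ((Finset.range (n + 2)).filter (Rec N m)
              = (Finset.range (n + 1)).filter (Rec N m) ∧ ¬ Rec N m (n + 1)) := by
        rw [Finset.range_add_one, Finset.filter_insert]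
        by_cases h : Rec N m (n + 1)
        · left; rw [if_pos h]
        · right; rw [if_neg h]; exact ⟨rfl, h⟩
      by_cases h : Rec N m (n + 1)
      · have hlt : F N m (n + 1) < Fm N m n := (rec_iff N m n).mp h
        have hFm : Fm N m (n + 1) = Fm N m n - 1 := by
          have h2 : Fm N m n ≤ F N m n := Fm_le N m (le_refl n)
          rw [Fm]
          omega
        rcases hsplit with hs | hs
        · rw [cnt, hs, Finset.card_insert_of_notMem (by simp), hFm]
          push_cast
          rw [show ((Finset.range (n+1)).filter (Rec N m)).card = cnt N m n from rfl]
          omega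
        · exact absurd h hs.2
      · have hge : Fm N m n ≤ F N m (n + 1) := by
          by_contra hc
          exact h ((rec_iff N m n).mpr (by omega))
        have hFm : Fm N m (n + 1) = Fm N m n := by rw [Fm]; omega
        rcases hsplit with hs | hs
        · exfalso
          have : n + 1 ∈ (Finset.range (n + 2)).filter (Rec N m) := by
            rw [hs]; exact Finset.mem_insert_self _ _
          exact h (Finset.mem_filter.mp this).2
        · rw [cnt, hs.1, hFm]; exact ih


theorem F_eq_sum (n : ℕ) : F N m n = ∑ k ∈ Finset.range n, m ((k : ℕ) : ZMod N) := by
  induction n with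
  | zero => rfl
  | succ n ih => rw [Finset.sum_range_succ, F, ih]

theorem sum_range_natCast [NeZero N] (f : ZMod N → ℤ) :
    ∑ k ∈ Finset.range N, f ((k : ℕ) : ZMod N) = ∑ j : ZMod N, f j := by
  apply Finset.sum_nbij' (i := fun k => ((k : ℕ) : ZMod N)) (j := fun a => a.val)
  · intro a _; exact Finset.mem_univ _
  · intro a _; exact Finset.mem_range.mpr (ZMod.val_lt a)
  · intro a ha
    exact ZMod.val_cast_of_lt (Finset.mem_range.mp ha)
  · intro a _
    exact ZMod.natCast_rightInverse a
  · intro a _; rfl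

theorem F_N [NeZero N] : F N m N = ∑ j : ZMod N, m j := by
  rw [F_eq_sum, sum_range_natCast]

theorem F_add_N [NeZero N] : ∀ n : ℕ, F N m (n + N) = F N m n + ∑ j : ZMod N, m j := by
  intro n
  induction n with
  | zero => simpa [F] using F_N N m
  | succ n ih =>
      have e : n + 1 + N = (n + N) + 1 := by omega
      rw [e, F, ih]
      have e2 : (((n + N : ℕ) : ZMod N)) = ((n : ℕ) : ZMod N) := by
        push_cast
        simp
      rw [e2, F]
      ring

theorem Fm_add_N [NeZero N] :
    ∀ n : ℕ, Fm N m (N + n) = min (Fm N m N) (Fm N m n + ∑ j : ZMod N, m j) := by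
  intro n
  induction n with
  | zero =>
      have h1 : Fm N m N ≤ F N m N := Fm_le N m (le_refl N)
      rw [F_N] at h1
      simp only [Nat.add_zero, Fm]
      omega
  | succ n ih =>
      have e : N + (n + 1) = (N + n) + 1 := by omega
      rw [e, Fm, ih]
      have e2 : N + n + 1 = (n + 1) + N := by omega
      rw [e2, F_add_N]
      have : Fm N m (n + 1) = min (Fm N m n) (F N m (n + 1)) := rfl
      omega

theorem Fm_two_N [NeZero N] (hsum : ∑ j : ZMod N, m j < 0) :
    Fm N m (2 * N) = Fm N m N + ∑ j : ZMod N, m j := by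
  have := Fm_add_N N m N
  rw [show 2 * N = N + N by omega, this]
  omega


theorem sum_Icc_eq [NeZero N] :
    ∀ r n : ℕ, r ≤ n →
      ∑ k ∈ Finset.Icc 1 r, m ((n : ZMod N) - ((k : ℕ) : ZMod N))
        = F N m n - F N m (n - r) := by
  intro r
  induction r with
  | zero => intro n _; simp
  | succ r ih =>
      intro n hn
      rw [Finset.sum_Icc_succ_top (by omega), ih n (by omega)]
      have e1 : ((n - (r + 1) : ℕ) : ZMod N) = (n : ZMod N) - (((r + 1 : ℕ)) : ZMod N) := by
        rw [Nat.cast_sub (by omega)]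
      have e2 : n - r = (n - (r + 1)) + 1 := by omega
      have e3 : F N m (n - r) = F N m (n - (r + 1)) + m ((n : ZMod N) - (((r + 1 : ℕ)) : ZMod N)) := by
        rw [e2, F, e1]
      omega

theorem sum_Icc_period [NeZero N] (j : ZMod N) (r : ℕ) :
    ∑ k ∈ Finset.Icc 1 (r + N), m (j - ((k : ℕ) : ZMod N))
      = (∑ k ∈ Finset.Icc 1 r, m (j - ((k : ℕ) : ZMod N))) + ∑ i : ZMod N, m i := by
  have h1 : ∀ a : ℕ, Finset.Icc 1 a = Finset.Ioc 0 a := fun a => by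
    rw [← Finset.Icc_add_one_left_eq_Ioc]; rfl
  rw [h1, h1, ← Finset.sum_Ioc_consecutive (fun k => m (j - ((k : ℕ) : ZMod N)))
    (Nat.zero_le r) (Nat.le_add_right r N)]
  congr 1
  have h2 : Finset.Ioc r (r + N) = Finset.Ico (r + 1) (r + N + 1) := by
    ext x; simp [Nat.lt_succ_iff]
  rw [h2, Finset.sum_Ico_eq_sum_range]
  have h3 : r + N + 1 - (r + 1) = N := by omega
  rw [h3]
  have h4 : ∀ i : ℕ, m (j - (((r + 1 + i : ℕ)) : ZMod N))
      = (fun x : ZMod N => m (j - ((r : ℕ) : ZMod N) - 1 - x)) ((i : ℕ) : ZMod N) := by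
    intro i
    push_cast
    ring_nf
  rw [Finset.sum_congr rfl (fun i _ => h4 i),
    sum_range_natCast N (fun x : ZMod N => m (j - ((r : ℕ) : ZMod N) - 1 - x))]
  exact Fintype.sum_equiv (Equiv.subLeft (j - ((r : ℕ) : ZMod N) - 1)) _ _ (fun x => rfl)


theorem good_iff [NeZero N] (hm : ∀ j, m j = -1 ∨ m j = 0 ∨ m j = 1)
    (hsum : ∑ j : ZMod N, m j < 0) {n : ℕ} (h1 : N ≤ n) (h2 : n < 2 * N) :
    (m ((n : ℕ) : ZMod N) = -1 ∧ ∀ r : ℕ, 1 ≤ r →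
        ∑ k ∈ Finset.Icc 1 r, m (((n : ℕ) : ZMod N) - ((k : ℕ) : ZMod N)) ≤ 0)
      ↔ Rec N m (n + 1) := by
  have hFn1 : F N m (n + 1) = F N m n + m ((n : ℕ) : ZMod N) := rfl
  constructor
  · rintro ⟨hmj, hall⟩ q hq
    rcases Nat.lt_or_ge q n with hqn | hqn
    · have hr1 : (1 : ℕ) ≤ n - q := by omega
      have := hall (n - q) hr1
      rw [sum_Icc_eq N m (n - q) n (by omega)] at this
      have e : n - (n - q) = q := by omega
      rw [e] at this
      omega
    · have : q = n := by omega
      subst this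
      omega
  · intro h
    have hq := h n (by omega)
    have hmneg : m ((n : ℕ) : ZMod N) = -1 := by
      rcases hm ((n : ℕ) : ZMod N) with h' | h' | h' <;> omega
    refine ⟨hmneg, ?_⟩
    intro r
    induction r using Nat.strong_induction_on with
    | _ r ih =>
      intro hr
      rcases le_or_gt r N with hrN | hrN
      · rw [sum_Icc_eq N m r n (by omega)]
        have := h (n - r) (by omega)
        omega
      · have e : r = (r - N) + N := by omega
        rw [e, sum_Icc_period]
        have := ih (r - N) (by omega) (by omega)
        omega

end Stmt0Aux

/-- Let `N ≥ 1` and `m : ZMod N → ℤ` with `m j ∈ {-1,0,1}` for all `j`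
and `∑ j, m j < 0`. Then the cardinality of the set of `j` with `m j = -1` and
`∑_{k=1}^r m (j - k) ≤ 0` for every `r ≥ 1` equals `-∑ j, m j`. -/
theorem stmt_0 (N : ℕ) [NeZero N] (m : ZMod N → ℤ)
    (hm : ∀ j, m j = -1 ∨ m j = 0 ∨ m j = 1)
    (hsum : ∑ j : ZMod N, m j < 0) :
    ({j : ZMod N | m j = -1 ∧ ∀ r : ℕ, 1 ≤ r →
        ∑ k ∈ Finset.Icc 1 r, m (j - (k : ZMod N)) ≤ 0}.ncard : ℤ)
      = -∑ j : ZMod N, m j := by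
  classical
  open Stmt0Aux in
  set Good : Set (ZMod N) := {j : ZMod N | m j = -1 ∧ ∀ r : ℕ, 1 ≤ r →
        ∑ k ∈ Finset.Icc 1 r, m (j - (k : ZMod N)) ≤ 0} with hGoodDef
  set T : Finset ℕ := (Finset.Ico N (2 * N)).filter (fun n => Rec N m (n + 1)) with hT
  have hmemT : ∀ n, n ∈ T ↔ (N ≤ n ∧ n < 2 * N) ∧ Rec N m (n + 1) := by
    intro n
    simp only [hT, Finset.mem_filter, Finset.mem_Ico]
  have hGood : Good = (fun n : ℕ => ((n : ℕ) : ZMod N)) '' ↑T := by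
    ext j
    constructor
    · intro hj
      refine ⟨j.val + N, ?_, ?_⟩
      · have hcast : (((j.val + N : ℕ)) : ZMod N) = j := by
          push_cast
          rw [ZMod.natCast_self, ZMod.natCast_zmod_val, add_zero]
        rw [Finset.mem_coe, hmemT]
        refine ⟨⟨by omega, by have := ZMod.val_lt j; omega⟩, ?_⟩
        rw [← good_iff N m hm hsum (n := j.val + N) (by omega)
          (by have := ZMod.val_lt j; omega), hcast]
        exact hj
      · push_cast
        rw [ZMod.natCast_self, ZMod.natCast_zmod_val, add_zero]
    · rintro ⟨n, hn, rfl⟩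
      rw [Finset.mem_coe, hmemT] at hn
      exact (good_iff N m hm hsum hn.1.1 hn.1.2).mpr hn.2
  have hinj : Set.InjOn (fun n : ℕ => ((n : ℕ) : ZMod N)) ↑T := by
    intro a ha b hb hab
    rw [Finset.mem_coe, hmemT] at ha hb
    have h1 := (ZMod.natCast_eq_natCast_iff' a b N).mp hab
    have ha' : a % N = a - N := by
      rw [Nat.mod_eq_sub_mod ha.1.1, Nat.mod_eq_of_lt (by omega)]
    have hb' : b % N = b - N := by
      rw [Nat.mod_eq_sub_mod hb.1.1, Nat.mod_eq_of_lt (by omega)]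
    omega
  have hcard1 : (Good.ncard : ℤ) = (T.card : ℤ) := by
    rw [hGood, Set.ncard_image_of_injOn hinj, Set.ncard_coe_finset]
  have hbij : T.card = ((Finset.Ico (N + 1) (2 * N + 1)).filter (Rec N m)).card := by
    apply Finset.card_bij (fun n _ => n + 1)
    · intro a ha
      rw [hmemT] at ha
      rw [Finset.mem_filter, Finset.mem_Ico]
      exact ⟨⟨by omega, by omega⟩, ha.2⟩
    · intro a _ b _ hab; omega
    · intro b hb
      rw [Finset.mem_filter, Finset.mem_Ico] at hb
      refine ⟨b - 1, ?_, by omega⟩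
      rw [hmemT]
      have e : b - 1 + 1 = b := by omega
      rw [e]
      exact ⟨⟨by omega, by omega⟩, hb.2⟩
  have hunion : cnt N m (2 * N) = cnt N m N
      + ((Finset.Ico (N + 1) (2 * N + 1)).filter (Rec N m)).card := by
    rw [cnt, cnt, Finset.range_eq_Ico,
      ← Finset.Ico_union_Ico_eq_Ico (Nat.zero_le (N + 1)) (by omega : N + 1 ≤ 2 * N + 1),
      Finset.filter_union,
      Finset.card_union_of_disjoint (Finset.disjoint_filter_filter
        (Finset.Ico_disjoint_Ico_consecutive 0 (N + 1) (2 * N + 1))), Finset.range_eq_Ico]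
  have h2N := cnt_eq N m hm (2 * N)
  have hN := cnt_eq N m hm N
  have hFm2 := Fm_two_N N m hsum
  rw [hGoodDef] at hcard1
  rw [hcard1, hbij]
  omega
end

section
/- Let N ≥ 1 be an integer and m : ZMod N → ℤ a function with m(j) ∈ {−1, 0, 1} for every j and with total sum Σ_{j ∈ ZMod N} m(j) < 0. Define A := {j ∈ ZMod N : m(j) = −1 and S_r(j) > 0 for some integer r ≥ 1} and B := {j ∈ ZMod N : m(j) = 1}. For j ∈ A let r(j) be the least integer r ≥ 1 with S_r(j) > 0 and set Φ(j) := j − r(j); for j ∈ B let r'(j) be the least integer r ≥ 0 with Σ_{k=0}^{r} m(j + k) = 0 (such r exists because Σ m < 0) and set Ψ(j) := j + r'(j). Then Φ maps A into B, Ψ maps B into A, and Φ and Ψ are mutually inverse bijections between A and B; in particular A and B have the same cardinality. -/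
/-- `S N m j r = ∑_{k=1}^r m (j - k)`, indices taken in `ZMod N`. -/
noncomputable def S (N : ℕ) (m : ZMod N → ℤ) (j : ZMod N) (r : ℕ) : ℤ :=
  ∑ k ∈ Finset.Icc 1 r, m (j - (k : ZMod N))

/-- `A N m` is the set of `j` with `m j = -1` and `S_r(j) > 0` for some `r ≥ 1`. -/
def A (N : ℕ) (m : ZMod N → ℤ) : Set (ZMod N) :=
  {j | m j = -1 ∧ ∃ r : ℕ, 1 ≤ r ∧ 0 < S N m j r}

/-- `B N m` is the set of `j` with `m j = 1`. -/
def B (N : ℕ) (m : ZMod N → ℤ) : Set (ZMod N) :=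
  {j | m j = 1}

/-- `Φ j = j - r(j)` where `r(j)` is the least `r ≥ 1` with `S_r(j) > 0`. -/
noncomputable def Phi (N : ℕ) (m : ZMod N → ℤ) (j : ZMod N) : ZMod N :=
  j - ((sInf {r : ℕ | 1 ≤ r ∧ 0 < S N m j r} : ℕ) : ZMod N)

/-- `Ψ j = j + r'(j)` where `r'(j)` is the least `r ≥ 0` with `∑_{k=0}^r m (j + k) = 0`. -/
noncomputable def Psi (N : ℕ) (m : ZMod N → ℤ) (j : ZMod N) : ZMod N :=
  j + ((sInf {r : ℕ | ∑ k ∈ Finset.range (r + 1), m (j + (k : ZMod N)) = 0} : ℕ) : ZMod N)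

/-- partial sums forward: `R N m j a = ∑_{k=0}^{a-1} m (j + k)`. -/
def R (N : ℕ) (m : ZMod N → ℤ) (j : ZMod N) (a : ℕ) : ℤ :=
  ∑ k ∈ Finset.range a, m (j + (k : ZMod N))

lemma R_zero (N : ℕ) (m : ZMod N → ℤ) (j : ZMod N) : R N m j 0 = 0 := by simp [R]

lemma R_succ (N : ℕ) (m : ZMod N → ℤ) (j : ZMod N) (a : ℕ) :
    R N m j (a + 1) = R N m j a + m (j + (a : ZMod N)) := Finset.sum_range_succ _ _

lemma R_one (N : ℕ) (m : ZMod N → ℤ) (j : ZMod N) : R N m j 1 = m j := by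
  simp [R]

lemma S_zero (N : ℕ) (m : ZMod N → ℤ) (j : ZMod N) : S N m j 0 = 0 := by simp [S]

lemma S_succ (N : ℕ) (m : ZMod N → ℤ) (j : ZMod N) (r : ℕ) :
    S N m j (r + 1) = S N m j r + m (j - ((r + 1 : ℕ) : ZMod N)) :=
  Finset.sum_Icc_succ_top (by omega) _

/-- The key reindexing identity. -/
lemma shiftS (N : ℕ) (m : ZMod N → ℤ) (j : ZMod N) (b s : ℕ) (hs : s ≤ b) :
    S N m (j + (b : ZMod N)) s = R N m j b - R N m j (b - s) := by
  rw [S, R, R, ← Finset.sum_Ico_eq_sub _ (Nat.sub_le b s)]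
  refine Finset.sum_nbij' (i := fun k => b - k) (j := fun k => b - k) ?_ ?_ ?_ ?_ ?_
  · intro a ha
    simp only [Finset.mem_Icc] at ha
    simp only [Finset.mem_Ico]
    omega
  · intro a ha
    simp only [Finset.mem_Ico] at ha
    simp only [Finset.mem_Icc]
    omega
  · intro a ha
    simp only [Finset.mem_Icc] at ha
    show b - (b - a) = a
    omega
  · intro a ha
    simp only [Finset.mem_Ico] at ha
    show b - (b - a) = a
    omega
  · intro a ha
    simp only [Finset.mem_Icc] at ha
    congr 1
    rw [Nat.cast_sub (by omega)]
    ring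

lemma R_full (N : ℕ) [NeZero N] (m : ZMod N → ℤ) (j : ZMod N) :
    R N m j N = ∑ x : ZMod N, m x := by
  rw [R]
  refine Finset.sum_nbij' (i := fun k => j + (k : ZMod N)) (j := fun x => (x - j).val)
    ?_ ?_ ?_ ?_ ?_
  · intro a _; exact Finset.mem_univ _
  · intro x _
    simp only [Finset.mem_range]
    exact ZMod.val_lt _
  · intro a ha
    simp only [Finset.mem_range] at ha
    show ((j + (a : ZMod N)) - j).val = a
    rw [add_sub_cancel_left, ZMod.val_cast_of_lt ha]
  · intro x _
    show j + (((x - j).val : ℕ) : ZMod N) = x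
    rw [ZMod.natCast_rightInverse (x - j)]
    ring
  · intro a _; rfl

lemma keyA {N : ℕ} [NeZero N] {m : ZMod N → ℤ}
    (hm : ∀ j, m j = -1 ∨ m j = 0 ∨ m j = 1) {j : ZMod N} (hj : j ∈ A N m) :
    Phi N m j ∈ B N m ∧ Psi N m (Phi N m j) = j := by
  obtain ⟨hjm, hex⟩ := hj
  set r := sInf {r : ℕ | 1 ≤ r ∧ 0 < S N m j r} with hrdef
  have hrP : 1 ≤ r ∧ 0 < S N m j r := Nat.sInf_mem hex
  obtain ⟨hr1, hrpos⟩ := hrP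
  have hmin : ∀ u, u < r → S N m j u ≤ 0 := by
    intro u hu
    rcases Nat.eq_zero_or_pos u with h0 | h1
    · rw [h0, S_zero]
    · by_contra h
      exact absurd (Nat.sInf_le ⟨h1, lt_of_not_ge h⟩ : r ≤ u) (by omega)
  have e : r - 1 + 1 = r := by omega
  have hsplit := S_succ N m j (r - 1)
  rw [e] at hsplit
  have hprev : S N m j (r - 1) ≤ 0 := hmin _ (by omega)
  have hm1 : m (j - (r : ZMod N)) = 1 := by
    rcases hm (j - (r : ZMod N)) with h | h | h <;> omega
  have hSr : S N m j r = 1 := by omega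
  have hPhi : Phi N m j = j - (r : ZMod N) := rfl
  set i := j - (r : ZMod N) with hidef
  have hij : i + (r : ZMod N) = j := by rw [hidef]; ring
  -- express S j in terms of R i
  have hSR : ∀ u, u ≤ r → S N m j u = R N m i r - R N m i (r - u) := by
    intro u hu
    rw [← hij]
    exact shiftS N m i r u hu
  have hRr : R N m i r = 1 := by
    have := hSR r le_rfl
    simp only [Nat.sub_self, R_zero] at this
    omega
  have hRa : ∀ a, a ≤ r → R N m i a = 1 - S N m j (r - a) := by
    intro a ha
    have := hSR (r - a) (by omega)
    rw [show r - (r - a) = a by omega] at this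
    omega
  -- the Psi set for i
  have hrQ : r ∈ {s : ℕ | ∑ k ∈ Finset.range (s + 1), m (i + (k : ZMod N)) = 0} := by
    show R N m i (r + 1) = 0
    rw [R_succ, hRr, hij, hjm]
    ring
  have hne : ∀ s, s < r → s ∉ {s : ℕ | ∑ k ∈ Finset.range (s + 1), m (i + (k : ZMod N)) = 0} := by
    intro s hs hmem
    have hmem' : R N m i (s + 1) = 0 := hmem
    rw [hRa (s + 1) (by omega)] at hmem'
    have := hmin (r - (s + 1)) (by omega)
    omega
  have hsInf : sInf {s : ℕ | ∑ k ∈ Finset.range (s + 1), m (i + (k : ZMod N)) = 0} = r := by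
    refine le_antisymm (Nat.sInf_le hrQ) (le_of_not_gt fun h => ?_)
    exact hne _ h (Nat.sInf_mem ⟨r, hrQ⟩)
  constructor
  · show m i = 1
    exact hm1
  · have hrfl : Psi N m i =
        i + ((sInf {s : ℕ | ∑ k ∈ Finset.range (s + 1), m (i + (k : ZMod N)) = 0} : ℕ)
          : ZMod N) := rfl
    rw [hPhi, hrfl, hsInf, hij]

lemma keyB {N : ℕ} [NeZero N] {m : ZMod N → ℤ}
    (hm : ∀ j, m j = -1 ∨ m j = 0 ∨ m j = 1) (hsum : ∑ j : ZMod N, m j < 0)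
    {j : ZMod N} (hj : j ∈ B N m) :
    Psi N m j ∈ A N m ∧ Phi N m (Psi N m j) = j := by
  have hjm : m j = 1 := hj
  have hR1 : R N m j 1 = 1 := by rw [R_one, hjm]
  -- existence of a zero of the forward partial sums
  have hCne : ∃ c, 1 ≤ c ∧ R N m j c ≤ 0 := by
    refine ⟨N, Nat.one_le_iff_ne_zero.mpr (NeZero.ne N), ?_⟩
    rw [R_full]; omega
  set c := sInf {c : ℕ | 1 ≤ c ∧ R N m j c ≤ 0} with hcdef
  have hcP : 1 ≤ c ∧ R N m j c ≤ 0 := Nat.sInf_mem hCne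
  have hc2 : 2 ≤ c := by
    rcases Nat.lt_or_ge c 2 with h | h
    · interval_cases c
      · omega
      · omega
    · exact h
  have hcprev : ¬(1 ≤ c - 1 ∧ R N m j (c - 1) ≤ 0) :=
    fun h => absurd (Nat.sInf_le h : c ≤ c - 1) (by omega)
  have hprevpos : 0 < R N m j (c - 1) := by
    by_contra h
    exact hcprev ⟨by omega, by omega⟩
  have hcsplit := R_succ N m j (c - 1)
  rw [show c - 1 + 1 = c by omega] at hcsplit
  have hczero : R N m j c = 0 := by
    rcases hm (j + ((c - 1 : ℕ) : ZMod N)) with h | h | h <;> omega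
  have hQne : ∃ s, (∑ k ∈ Finset.range (s + 1), m (j + (k : ZMod N)) = 0) := by
    refine ⟨c - 1, ?_⟩
    show R N m j (c - 1 + 1) = 0
    rw [show c - 1 + 1 = c by omega]
    exact hczero
  set s' := sInf {s : ℕ | ∑ k ∈ Finset.range (s + 1), m (j + (k : ZMod N)) = 0} with hs'def
  have hs'Q : R N m j (s' + 1) = 0 := Nat.sInf_mem hQne
  have hs'min : ∀ s, s < s' → R N m j (s + 1) ≠ 0 := by
    intro s hs hmem
    exact absurd (Nat.sInf_le hmem : s' ≤ s) (by omega)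
  have hs'1 : 1 ≤ s' := by
    rcases Nat.eq_zero_or_pos s' with h0 | h1
    · exfalso
      have h2 : R N m j 1 = 0 := by simpa [h0] using hs'Q
      omega
    · exact h1
  -- positivity of partial sums before s'
  have hpos : ∀ a, 1 ≤ a → a ≤ s' → 1 ≤ R N m j a := by
    intro a
    induction a with
    | zero => omega
    | succ n ih =>
      intro _ hle
      rcases Nat.eq_zero_or_pos n with h0 | h1
      · rw [h0]
        show (1:ℤ) ≤ R N m j 1
        omega
      · have hn : 1 ≤ R N m j n := ih h1 (by omega)
        have hne0 : R N m j (n + 1) ≠ 0 := hs'min n (by omega)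
        have := R_succ N m j n
        rcases hm (j + (n : ZMod N)) with h | h | h <;> omega
  have hRs' : 1 ≤ R N m j s' := hpos s' hs'1 le_rfl
  have hssplit := R_succ N m j s'
  have hms' : m (j + (s' : ZMod N)) = -1 := by
    rcases hm (j + (s' : ZMod N)) with h | h | h <;> omega
  have hRs'1 : R N m j s' = 1 := by omega
  set i := j + (s' : ZMod N) with hidef
  have hPsi : Psi N m j = i := rfl
  have hSi : ∀ u, u ≤ s' → S N m i u = R N m j s' - R N m j (s' - u) :=
    fun u hu => shiftS N m j s' u hu
  have hSis' : S N m i s' = 1 := by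
    have := hSi s' le_rfl
    simp only [Nat.sub_self, R_zero] at this
    omega
  have hiA : i ∈ A N m := ⟨hms', s', hs'1, by omega⟩
  have hSineg : ∀ u, 1 ≤ u → u < s' → S N m i u ≤ 0 := by
    intro u hu1 hu2
    have := hSi u (by omega)
    have := hpos (s' - u) (by omega) (by omega)
    omega
  have hs'P : s' ∈ {r : ℕ | 1 ≤ r ∧ 0 < S N m i r} := ⟨hs'1, by omega⟩
  have hsInf : sInf {r : ℕ | 1 ≤ r ∧ 0 < S N m i r} = s' := by
    refine le_antisymm (Nat.sInf_le hs'P) (le_of_not_gt fun h => ?_)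
    obtain ⟨h1, h2⟩ := (Nat.sInf_mem ⟨s', hs'P⟩ : _ ∈ {r : ℕ | 1 ≤ r ∧ 0 < S N m i r})
    have := hSineg _ h1 h
    omega
  refine ⟨hiA, ?_⟩
  have hrfl : Phi N m i =
      i - ((sInf {r : ℕ | 1 ≤ r ∧ 0 < S N m i r} : ℕ) : ZMod N) := rfl
  rw [hPsi, hrfl, hsInf, hidef]
  ring

/-- `Φ` maps `A` into `B`, `Ψ` maps `B` into `A`, they are mutually
inverse bijections between `A` and `B`, and `A` and `B` have the same cardinality. -/
theorem stmt_1 (N : ℕ) [NeZero N] (m : ZMod N → ℤ)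
    (hm : ∀ j, m j = -1 ∨ m j = 0 ∨ m j = 1)
    (hsum : ∑ j : ZMod N, m j < 0) :
    Set.MapsTo (Phi N m) (A N m) (B N m) ∧
    Set.MapsTo (Psi N m) (B N m) (A N m) ∧
    Set.InvOn (Psi N m) (Phi N m) (A N m) (B N m) ∧
    (A N m).ncard = (B N m).ncard := by
  have hA : ∀ j ∈ A N m, Phi N m j ∈ B N m ∧ Psi N m (Phi N m j) = j := fun j hj => keyA hm hj
  have hB : ∀ j ∈ B N m, Psi N m j ∈ A N m ∧ Phi N m (Psi N m j) = j :=
    fun j hj => keyB hm hsum hj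
  have hm1 : Set.MapsTo (Phi N m) (A N m) (B N m) := fun j hj => (hA j hj).1
  have hm2 : Set.MapsTo (Psi N m) (B N m) (A N m) := fun j hj => (hB j hj).1
  have hinv : Set.InvOn (Psi N m) (Phi N m) (A N m) (B N m) :=
    ⟨fun j hj => (hA j hj).2, fun j hj => (hB j hj).2⟩
  refine ⟨hm1, hm2, hinv, ?_⟩
  have hbij : Set.BijOn (Phi N m) (A N m) (B N m) := hinv.bijOn hm1 hm2
  rw [← hbij.image_eq]
  exact (Set.ncard_image_of_injOn hbij.injOn).symm
end

section
/- Let V be a finite-dimensional vector space over ℚ, let R be a finite set of nonzero linear functionals on V, and let R⁺ ⊆ R be a subset such that R is the disjoint union of R⁺ and −R⁺ := {−α : α ∈ R⁺}. Let N ≥ 1 be an integer and δ : V ≃ V a linear automorphism with δ^N = id such that the map α ↦ α ∘ δ sends R bijectively onto R. Let μ ∈ V satisfy α(μ) ∈ {−1, 0, 1} for every α ∈ R, set ν := (1/N) · Σ_{k=1}^{N} δ^k(μ), and assume α(ν) ≤ 0 for every α ∈ R⁺. Define R_C := {α ∈ R : α(μ) = −1, α(ν) < 0, and Σ_{k=1}^{r}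 α(δ^k(μ)) ≤ 0 for every integer r ≥ 1}. Then the cardinality of R_C equals −Σ_{α ∈ R⁺} α(ν). -/
lemma aux_icc_range {M : Type*} [AddCommMonoid M] (f : ℕ → M) (r : ℕ) :
    ∑ k ∈ Finset.Icc 1 r, f k = ∑ k ∈ Finset.range r, f (k + 1) := by
  induction r with
  | zero => simp
  | succ n ih =>
      rw [Finset.sum_Icc_succ_top (by omega), ih, Finset.sum_range_succ]

lemma aux_shift {A : Type*} [AddCommGroup A] {N : ℕ} (f : ℕ → A)
    (hf : ∀ k, f (k + N) = f k) :
    ∑ k ∈ Finset.range N, f (k + 1) = ∑ k ∈ Finset.range N, f k := by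
  have h1 := Finset.sum_range_succ f N
  have h2 := Finset.sum_range_succ' f N
  have h0 : f N = f 0 := by simpa using hf 0
  rw [h1, h0] at h2
  exact (add_right_cancel h2).symm

lemma aux_window {A : Type*} [AddCommGroup A] {N : ℕ} (f : ℕ → A)
    (hf : ∀ k, f (k + N) = f k) :
    ∀ m, ∑ k ∈ Finset.range N, f (m + k) = ∑ k ∈ Finset.range N, f k := by
  intro m
  induction m with
  | zero => simp
  | succ m ih =>
      have h := aux_shift (fun k => f (m + k))
        (fun k => by show f (m + (k + N)) = f (m + k); rw [← Nat.add_assoc]; exact hf (m + k))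
      calc ∑ k ∈ Finset.range N, f (m + 1 + k)
          = ∑ k ∈ Finset.range N, f (m + (k + 1)) := by
            apply Finset.sum_congr rfl; intro k _; congr 1; omega
        _ = ∑ k ∈ Finset.range N, f (m + k) := h
        _ = ∑ k ∈ Finset.range N, f k := ih

lemma aux_block {N : ℕ} (f : ℕ → ℚ) (hf : ∀ k, f (k + N) = f k) (m : ℕ) :
    ∑ k ∈ Finset.range (m + N), f (k + 1)
      = (∑ k ∈ Finset.range m, f (k + 1)) + ∑ k ∈ Finset.range N, f (k + 1) := by
  rw [Finset.sum_range_add]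
  congr 1
  have h1 : ∀ j, ∑ k ∈ Finset.range N, f (j + k) = ∑ k ∈ Finset.range N, f k :=
    aux_window f hf
  calc ∑ k ∈ Finset.range N, f (m + k + 1)
      = ∑ k ∈ Finset.range N, f ((m + 1) + k) := by
        apply Finset.sum_congr rfl; intro k _; congr 1; omega
    _ = ∑ k ∈ Finset.range N, f k := h1 (m + 1)
    _ = ∑ k ∈ Finset.range N, f (1 + k) := (h1 1).symm
    _ = ∑ k ∈ Finset.range N, f (k + 1) := by
        apply Finset.sum_congr rfl; intro k _; congr 1; omega


/-- Let `V` be a finite-dimensional `ℚ`-vector space, `R` a finite set of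
nonzero linear functionals, `Rpos ⊆ R` with `R` the disjoint union of `Rpos` and
`-Rpos`. Let `δ : V ≃ₗ V` with `δ ^ N = 1` permuting `R` (via `α ↦ α ∘ δ`), `μ ∈ V`
with `α μ ∈ {-1,0,1}` for all `α ∈ R`, `ν = (1/N) • ∑_{k=1}^N δ^k μ` with `α ν ≤ 0`
for all `α ∈ Rpos`. Then the cardinality of
`R_C = {α ∈ R | α μ = -1, α ν < 0, ∑_{k=1}^r α (δ^k μ) ≤ 0 for all r ≥ 1}`
equals `-∑_{α ∈ Rpos} α ν`. -/
theorem stmt_2 {V : Type*} [AddCommGroup V] [Module ℚ V] [FiniteDimensional ℚ V]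
    (R Rpos : Finset (Module.Dual ℚ V))
    (hR0 : ∀ α ∈ R, α ≠ 0)
    (hsplit : ∀ α : Module.Dual ℚ V, α ∈ R ↔ (α ∈ Rpos ∨ -α ∈ Rpos))
    (hdisj : ∀ α ∈ Rpos, -α ∉ Rpos)
    (N : ℕ) (hN : 1 ≤ N)
    (δ : V ≃ₗ[ℚ] V) (hδN : δ ^ N = 1)
    (hδR : ∀ α ∈ R, α.comp (δ : V →ₗ[ℚ] V) ∈ R)
    (μ : V) (hμ : ∀ α ∈ R, α μ = -1 ∨ α μ = 0 ∨ α μ = 1)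
    (ν : V) (hν : ν = (N : ℚ)⁻¹ • ∑ k ∈ Finset.Icc 1 N, (δ ^ k) μ)
    (hanti : ∀ α ∈ Rpos, α ν ≤ 0) :
    (({α : Module.Dual ℚ V | α ∈ R ∧ α μ = -1 ∧ α ν < 0 ∧
        ∀ r : ℕ, 1 ≤ r → ∑ k ∈ Finset.Icc 1 r, α ((δ ^ k) μ) ≤ 0}).ncard : ℚ)
      = -∑ α ∈ Rpos, α ν := by
  classical
  have hNQ : (N : ℚ) ≠ 0 := Nat.cast_ne_zero.mpr (by omega)
  -- the shift operator on dual functionals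
  set Φ : Module.Dual ℚ V → Module.Dual ℚ V :=
    fun α => α.comp (δ : V →ₗ[ℚ] V) with hΦdef
  have hΦapp : ∀ (α : Module.Dual ℚ V) (v : V), Φ α v = α (δ v) := fun _ _ => rfl
  have hΦinj : Function.Injective Φ := by
    intro a b hab
    ext v
    have h := congrArg (fun f : Module.Dual ℚ V => f (δ.symm v)) hab
    simpa [hΦapp] using h
  have hΦR : ∀ α ∈ R, Φ α ∈ R := hδR
  -- the sequence g α k = α (δ^k μ)
  set g : Module.Dual ℚ V → ℕ → ℚ := fun α k => α ((δ ^ k) μ) with hgdef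
  have hpowsucc : ∀ (k : ℕ) (v : V), (δ ^ (k + 1)) v = δ ((δ ^ k) v) := by
    intro k v
    rw [LinearEquiv.pow_apply, LinearEquiv.pow_apply, Function.iterate_succ_apply']
  have hgΦ : ∀ (α : Module.Dual ℚ V) (k : ℕ), g α (k + 1) = g (Φ α) k := by
    intro α k
    show α ((δ ^ (k + 1)) μ) = α (δ ((δ ^ k) μ))
    rw [hpowsucc]
  have hper : ∀ (α : Module.Dual ℚ V) (k : ℕ), g α (k + N) = g α k := by
    intro α k
    show α ((δ ^ (k + N)) μ) = α ((δ ^ k) μ)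
    rw [pow_add, hδN, mul_one]
  -- iterate of Φ
  have hgiter : ∀ (α : Module.Dual ℚ V) (k : ℕ), g α k = (Φ^[k] α) μ := by
    intro α k
    induction k generalizing α with
    | zero => show α ((δ ^ 0) μ) = α μ; rw [pow_zero]; rfl
    | succ k ih =>
        rw [hgΦ, ih (Φ α), ← Function.iterate_succ_apply]
  have hΦiterR : ∀ α ∈ R, ∀ k : ℕ, Φ^[k] α ∈ R := by
    intro α hα k
    induction k with
    | zero => exact hα
    | succ k ih => rw [Function.iterate_succ_apply']; exact hΦR _ ih
  have hval : ∀ α ∈ R, ∀ k : ℕ, g α k = -1 ∨ g α k = 0 ∨ g α k = 1 := by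
    intro α hα k
    rw [hgiter]
    exact hμ _ (hΦiterR α hα k)
  -- partial sums
  set T : Module.Dual ℚ V → ℕ → ℚ := fun α r => ∑ k ∈ Finset.range r, g α (k + 1)
    with hTdef
  have hTIcc : ∀ (α : Module.Dual ℚ V) (r : ℕ),
      ∑ k ∈ Finset.Icc 1 r, α ((δ ^ k) μ) = T α r :=
    fun α r => aux_icc_range (fun k => α ((δ ^ k) μ)) r
  have hT0 : ∀ α, T α 0 = 0 := fun α => by simp [hTdef]
  have hTsucc : ∀ (α : Module.Dual ℚ V) (r : ℕ), T α (r + 1) = g α 1 + T (Φ α) r := by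
    intro α r
    show ∑ k ∈ Finset.range (r + 1), g α (k + 1) = _
    rw [Finset.sum_range_succ' (fun k => g α (k + 1)) r]
    have : ∀ k, g α (k + 1 + 1) = g (Φ α) (k + 1) := fun k => hgΦ α (k + 1)
    rw [Finset.sum_congr rfl (fun k _ => this k)]
    show T (Φ α) r + g α (0 + 1) = g α 1 + T (Φ α) r
    rw [add_comm]
  have hTstep : ∀ (α : Module.Dual ℚ V) (r : ℕ), T α (r + 1) = T α r + g α (r + 1) := by
    intro α r
    exact Finset.sum_range_succ (fun k => g α (k + 1)) r
  -- α ν in terms of T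
  have hTν : ∀ α : Module.Dual ℚ V, α ν = (N : ℚ)⁻¹ * T α N := by
    intro α
    rw [hν, map_smul, map_sum, smul_eq_mul, hTIcc]
  have hTNν : ∀ α : Module.Dual ℚ V, T α N = (N : ℚ) * α ν := by
    intro α
    rw [hTν]
    field_simp
  -- δ fixes ν
  have hδν : δ ν = ν := by
    rw [hν, map_smul, map_sum]
    congr 1
    have hp : ∀ k, (δ ^ (k + N)) μ = (δ ^ k) μ := by
      intro k; rw [pow_add, hδN, mul_one]
    calc ∑ k ∈ Finset.Icc 1 N, δ ((δ ^ k) μ)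
        = ∑ k ∈ Finset.Icc 1 N, (δ ^ (k + 1)) μ := by
          apply Finset.sum_congr rfl; intro k _; rw [hpowsucc]
      _ = ∑ k ∈ Finset.range N, (δ ^ (k + 1 + 1)) μ :=
          aux_icc_range (fun k => (δ ^ (k + 1)) μ) N
      _ = ∑ k ∈ Finset.range N, (δ ^ (k + 1)) μ := by
          exact aux_shift (fun k => (δ ^ (k + 1)) μ)
            (fun k => by show (δ ^ (k + N + 1)) μ = _;
                         rw [show k + N + 1 = (k + 1) + N by omega, hp])
      _ = ∑ k ∈ Finset.Icc 1 N, (δ ^ k) μ :=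
          (aux_icc_range (fun k => (δ ^ k) μ) N).symm
  have hΦν : ∀ α : Module.Dual ℚ V, Φ α ν = α ν := by
    intro α; rw [hΦapp, hδν]
  -- the max of partial sums
  have hne : (Finset.range N).Nonempty := ⟨0, Finset.mem_range.mpr (by omega)⟩
  set M : Module.Dual ℚ V → ℚ := fun α => (Finset.range N).sup' hne (T α) with hMdef
  have hM0 : ∀ α, 0 ≤ M α := by
    intro α
    have := Finset.le_sup' (T α) (Finset.mem_range.mpr (show 0 < N by omega))
    rw [hT0] at this
    exact this
  have hMmem : ∀ α, ∃ r < N, M α = T α r := by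
    intro α
    obtain ⟨r, hr, h⟩ := Finset.exists_mem_eq_sup' hne (T α)
    exact ⟨r, Finset.mem_range.mp hr, h⟩
  -- Lemma A: all partial sums bounded by M
  have hMA : ∀ α : Module.Dual ℚ V, α ν ≤ 0 → ∀ r, T α r ≤ M α := by
    intro α hαν r
    induction r using Nat.strong_induction_on with
    | _ r ih =>
      by_cases hr : r < N
      · exact Finset.le_sup' (T α) (Finset.mem_range.mpr hr)
      · have hNr : N ≤ r := not_lt.mp hr
        have hsplit : T α r = T α (r - N) + T α N := by
          have := aux_block (g α) (hper α) (r - N)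
          rw [show (r - N) + N = r by omega] at this
          exact this
        have hTN : T α N ≤ 0 := by
          rw [hTNν]
          apply mul_nonpos_of_nonneg_of_nonpos _ hαν
          positivity
        have := ih (r - N) (by omega)
        linarith
  -- Lemma C: characterization of "all partial sums ≤ 0"
  have hMC : ∀ α : Module.Dual ℚ V, α ν ≤ 0 →
      ((∀ r : ℕ, 1 ≤ r → T α r ≤ 0) ↔ M α = 0) := by
    intro α hαν
    constructor
    · intro h
      obtain ⟨r, hr, hMr⟩ := hMmem α
      rcases Nat.eq_zero_or_pos r with h0 | h1
      · rw [hMr, h0, hT0]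
      · exact le_antisymm (by rw [hMr]; exact h r h1) (hM0 α)
    · intro h r _
      have := hMA α hαν r
      rw [h] at this
      exact this
  -- Lemma B: recursion for M
  have hMB : ∀ α : Module.Dual ℚ V, α ν ≤ 0 →
      M α = max 0 (g α 1 + M (Φ α)) := by
    intro α hαν
    have hΦαν : Φ α ν ≤ 0 := by rw [hΦν]; exact hαν
    apply le_antisymm
    · obtain ⟨r, hr, hMr⟩ := hMmem α
      rcases r with _ | s
      · rw [hMr, hT0]; exact le_max_left _ _
      · rw [hMr, hTsucc]
        have := hMA (Φ α) hΦαν s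
        have h2 : g α 1 + T (Φ α) s ≤ g α 1 + M (Φ α) := by linarith
        exact h2.trans (le_max_right _ _)
    · apply max_le (hM0 α)
      obtain ⟨s, hs, hMs⟩ := hMmem (Φ α)
      have := hMA α hαν (s + 1)
      rw [hTsucc] at this
      rw [hMs]
      exact this
  -- integrality
  have hTint : ∀ α ∈ R, ∀ r : ℕ, ∃ n : ℤ, T α r = n := by
    intro α hα r
    induction r with
    | zero => exact ⟨0, by rw [hT0]; norm_num⟩
    | succ r ih =>
        obtain ⟨n, hn⟩ := ih
        rcases hval α hα (r + 1) with h | h | h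
        · exact ⟨n - 1, by rw [hTstep, hn, h]; push_cast; ring⟩
        · exact ⟨n, by rw [hTstep, hn, h]; push_cast; ring⟩
        · exact ⟨n + 1, by rw [hTstep, hn, h]; push_cast; ring⟩
  have hD : ∀ α ∈ R, M α ≠ 0 → 1 ≤ M α := by
    intro α hα hz
    obtain ⟨r, hr, hMr⟩ := hMmem α
    obtain ⟨n, hn⟩ := hTint α hα r
    have hM : M α = (n : ℚ) := by rw [hMr, hn]
    have hpos : 0 < (n : ℚ) := lt_of_le_of_ne (hM ▸ hM0 α) (fun h => hz (by rw [hM, ← h]))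
    have : (1 : ℤ) ≤ n := by exact_mod_cast hpos
    rw [hM]
    exact_mod_cast this
  -- finsets S and C
  set S : Finset (Module.Dual ℚ V) := R.filter (fun α => α ν < 0) with hSdef
  set C : Finset (Module.Dual ℚ V) := R.filter
    (fun α => α μ = -1 ∧ α ν < 0 ∧ ∀ r : ℕ, 1 ≤ r → T α r ≤ 0) with hCdef
  have hCS : C ⊆ S := by
    intro α hα
    rw [hCdef, Finset.mem_filter] at hα
    rw [hSdef, Finset.mem_filter]
    exact ⟨hα.1, hα.2.2.1⟩
  have hSmaps : ∀ α ∈ S, Φ α ∈ S := by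
    intro α hα
    rw [hSdef, Finset.mem_filter] at hα ⊢
    exact ⟨hΦR α hα.1, by rw [hΦν]; exact hα.2⟩
  have himage : S.image Φ = S := by
    apply Finset.eq_of_subset_of_card_le
    · intro β hβ
      obtain ⟨α, hα, rfl⟩ := Finset.mem_image.mp hβ
      exact hSmaps α hα
    · rw [Finset.card_image_of_injective _ hΦinj]
  have hsumΦ : ∀ F : Module.Dual ℚ V → ℚ, ∑ α ∈ S, F (Φ α) = ∑ α ∈ S, F α := by
    intro F
    rw [← Finset.sum_image (fun x _ y _ h => hΦinj h), himage]
  -- membership of Φ α in C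
  have hΦμ : ∀ α : Module.Dual ℚ V, Φ α μ = g α 1 := by
    intro α
    show α (δ μ) = α ((δ ^ 1) μ)
    rw [pow_one]
  have hΦC : ∀ α ∈ R, α ν < 0 → (Φ α ∈ C ↔ (g α 1 = -1 ∧ M (Φ α) = 0)) := by
    intro α hα hαν
    have hΦαν : Φ α ν < 0 := by rw [hΦν]; exact hαν
    rw [hCdef, Finset.mem_filter]
    constructor
    · rintro ⟨-, h1, -, h3⟩
      exact ⟨by rw [← hΦμ]; exact h1, (hMC (Φ α) hΦαν.le).mp h3⟩
    · rintro ⟨h1, h2⟩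
      exact ⟨hΦR α hα, by rw [hΦμ]; exact h1, hΦαν, (hMC (Φ α) hΦαν.le).mpr h2⟩
  -- Lemma E: the key recursion with indicator
  have hE : ∀ α ∈ S, M α = M (Φ α) + g α 1 + (if Φ α ∈ C then (1 : ℚ) else 0) := by
    intro α hα
    rw [hSdef, Finset.mem_filter] at hα
    obtain ⟨hαR, hαν⟩ := hα
    rw [hMB α hαν.le]
    by_cases hc : Φ α ∈ C
    · obtain ⟨h1, h2⟩ := (hΦC α hαR hαν).mp hc
      rw [if_pos hc, h1, h2]
      norm_num
    · rw [if_neg hc]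
      have hnn : 0 ≤ g α 1 + M (Φ α) := by
        rcases hval α hαR 1 with h | h | h
        · have hz : M (Φ α) ≠ 0 := fun hz => hc ((hΦC α hαR hαν).mpr ⟨h, hz⟩)
          have := hD (Φ α) (hΦR α hαR) hz
          rw [h]; linarith
        · rw [h]; linarith [hM0 (Φ α)]
        · rw [h]; linarith [hM0 (Φ α)]
      rw [max_eq_right hnn]
      ring
  -- summation of Lemma E over S
  have hsumE : ∑ α ∈ S, M α
      = ∑ α ∈ S, M (Φ α) + ∑ α ∈ S, g α 1 + ∑ α ∈ S, (if Φ α ∈ C then (1 : ℚ) else 0) := by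
    rw [← Finset.sum_add_distrib, ← Finset.sum_add_distrib]
    exact Finset.sum_congr rfl hE
  have hsum1 : ∑ α ∈ S, M (Φ α) = ∑ α ∈ S, M α := hsumΦ M
  have hsum2 : ∑ α ∈ S, (if Φ α ∈ C then (1 : ℚ) else 0) = (C.card : ℚ) := by
    rw [hsumΦ (fun β => if β ∈ C then (1 : ℚ) else 0)]
    rw [Finset.sum_ite_mem]
    rw [Finset.inter_eq_right.mpr hCS]
    simp
  have hcard : (C.card : ℚ) = -∑ α ∈ S, g α 1 := by
    rw [hsum1, hsum2] at hsumE
    linarith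
  -- constancy of the column sums
  have hc : ∀ k : ℕ, ∑ α ∈ S, g α (k + 1) = ∑ α ∈ S, g α k := by
    intro k
    calc ∑ α ∈ S, g α (k + 1) = ∑ α ∈ S, g (Φ α) k :=
          Finset.sum_congr rfl (fun α _ => hgΦ α k)
      _ = ∑ α ∈ S, g α k := hsumΦ (fun β => g β k)
  have hcconst : ∀ k : ℕ, ∑ α ∈ S, g α k = ∑ α ∈ S, g α 0 := by
    intro k
    induction k with
    | zero => rfl
    | succ k ih => rw [hc k, ih]
  -- sum of α ν over S equals column sum
  have hsumν : ∑ α ∈ S, α ν = ∑ α ∈ S, g α 1 := by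
    have h1 : ∑ α ∈ S, α ν = (N : ℚ)⁻¹ * ∑ α ∈ S, T α N := by
      rw [Finset.mul_sum]
      exact Finset.sum_congr rfl (fun α _ => hTν α)
    have h2 : ∑ α ∈ S, T α N = ∑ k ∈ Finset.range N, ∑ α ∈ S, g α (k + 1) := by
      rw [Finset.sum_comm]
    have h3 : ∑ k ∈ Finset.range N, ∑ α ∈ S, g α (k + 1)
        = (N : ℚ) * ∑ α ∈ S, g α 1 := by
      rw [Finset.sum_congr rfl (fun k _ => by rw [hcconst (k + 1), ← hcconst 1])]
      rw [Finset.sum_const, Finset.card_range, nsmul_eq_mul]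
    rw [h1, h2, h3, ← mul_assoc, inv_mul_cancel₀ hNQ, one_mul]
  -- sum over Rpos equals sum over S
  have hSsub : S ⊆ Rpos := by
    intro α hα
    rw [hSdef, Finset.mem_filter] at hα
    obtain ⟨hαR, hαν⟩ := hα
    rcases (hsplit α).mp hαR with h | h
    · exact h
    · exfalso
      have := hanti (-α) h
      simp only [LinearMap.neg_apply] at this
      linarith
  have hsumpos : ∑ α ∈ Rpos, α ν = ∑ α ∈ S, α ν := by
    symm
    apply Finset.sum_subset hSsub
    intro α hα hnα
    have hαR : α ∈ R := (hsplit α).mpr (Or.inl hα)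
    have h1 : ¬ (α ν < 0) := by
      intro h
      exact hnα (by rw [hSdef, Finset.mem_filter]; exact ⟨hαR, h⟩)
    exact le_antisymm (hanti α hα) (not_lt.mp h1)
  -- identify the set with C
  have hsetC : {α : Module.Dual ℚ V | α ∈ R ∧ α μ = -1 ∧ α ν < 0 ∧
      ∀ r : ℕ, 1 ≤ r → ∑ k ∈ Finset.Icc 1 r, α ((δ ^ k) μ) ≤ 0} = ↑C := by
    ext α
    rw [hCdef]
    simp only [Set.mem_setOf_eq, Finset.coe_filter, Finset.mem_filter]
    constructor
    · rintro ⟨h1, h2, h3, h4⟩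
      exact ⟨h1, h2, h3, fun r hr => by rw [← hTIcc]; exact h4 r hr⟩
    · rintro ⟨h1, h2, h3, h4⟩
      exact ⟨h1, h2, h3, fun r hr => by rw [hTIcc]; exact h4 r hr⟩
  rw [hsetC, Set.ncard_coe_finset, hcard, hsumpos, hsumν]
end

section
/- Let p be a prime and k an algebraically closed field of characteristic p, with Witt vectors W(k) and Frobenius automorphism σ. Let I be a finite set, δ : I ≃ I a permutation, and m : I → ℤ a function with m(j) ∈ {−1, 0, 1} for all j, such that for every δ-orbit O ⊆ I one has Σ_{j ∈ O} m(j) < 0. Let ε : I → W(k)ˣ be any family of units and t : I → k a function with t(j) = 0 whenever m(j) ≠ −1; write τ_j ∈ W(k) for the Teichmüller lift of t(j). Define C := {j ∈ I : m(j) = −1 and Σ_{k=1}^{r} m(δ^{−k}(j)) ≤ 0 for every integer r ≥ 1}. Then there exists a family x : I → W(k) satisfying p · τ_j = −p · x_j + p^{1 + m(δ^{−1}(j))} · ε_j · σ(x_{δ^{−1}(j)}) for every j ∈ I if and only if t(j) = 0 for every j ∉ C. -/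
open scoped Classical
set_option linter.unusedSectionVars false
set_option maxHeartbeats 1000000
namespace Stmt5Aux

variable (p : ℕ) [hp : Fact p.Prime] {k : Type*} [Field k] [CharP k p]

local notation "W" => WittVector p k

lemma pow_p_mul_eq [PerfectRing k p] (s : ℕ) (c : W) :
    (p : W) ^ s * c = (WittVector.verschiebung)^[s] ((WittVector.frobenius)^[s] c) := by
  induction s generalizing c with
  | zero => simp
  | succ s ih =>
    have h1 : (p : W) ^ (s+1) * c = (p : W) ^ s * (c * p) := by ring
    rw [h1, ih, ← WittVector.verschiebung_frobenius c]
    rw [Function.iterate_succ_apply, Function.iterate_succ_apply]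
    congr 1
    exact (WittVector.verschiebung_frobenius_comm.iterate_right s _).symm

lemma coeff_iterate_verschiebung_lt (s i : ℕ) (hi : i < s) (c : W) :
    ((WittVector.verschiebung)^[s] c).coeff i = 0 := by
  induction s generalizing i with
  | zero => omega
  | succ s ih =>
    rw [Function.iterate_succ_apply']
    cases i with
    | zero => exact WittVector.verschiebung_coeff_zero _
    | succ i => rw [WittVector.verschiebung_coeff_succ]; exact ih i (by omega)

lemma coeff_zero_iterate_frobenius (s : ℕ) (c : W) :
    ((WittVector.frobenius)^[s] c).coeff 0 = c.coeff 0 ^ p ^ s := by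
  induction s with
  | zero => simp
  | succ s ih =>
    rw [Function.iterate_succ_apply', WittVector.coeff_frobenius_charP, ih, ← pow_mul,
      pow_succ]

lemma pPow_dvd_iff [PerfectRing k p] (s : ℕ) (z : W) :
    (p : W) ^ s ∣ z ↔ ∀ i < s, z.coeff i = 0 := by
  constructor
  · rintro ⟨c, rfl⟩ i hi
    rw [pow_p_mul_eq]
    exact coeff_iterate_verschiebung_lt p s i hi _
  · intro h
    induction s with
    | zero => simpa using dvd_refl z
    | succ s ih =>
      obtain ⟨c, rfl⟩ := ih (fun i hi => h i (by omega))
      have hc0 : c.coeff 0 = 0 := by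
        have := h s (by omega)
        rw [pow_p_mul_eq] at this
        have h2 := WittVector.iterate_verschiebung_coeff (p := p) ((WittVector.frobenius)^[s] c) s 0
        rw [zero_add] at h2
        rw [this] at h2
        rw [coeff_zero_iterate_frobenius] at h2
        have hps : p ^ s ≠ 0 := pow_ne_zero _ hp.out.ne_zero
        exact pow_eq_zero_iff hps |>.mp h2.symm
      -- c = verschiebung d
      set d : W := WittVector.mk p (fun i => c.coeff (i+1)) with hd
      have hcd : c = WittVector.verschiebung d := by
        apply WittVector.ext
        intro n
        cases n with
        | zero => rw [WittVector.verschiebung_coeff_zero, hc0]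
        | succ n => rw [WittVector.verschiebung_coeff_succ, hd, WittVector.coeff_mk]
      obtain ⟨e, he⟩ := (WittVector.frobenius_bijective p k).surjective d
      refine ⟨e, ?_⟩
      rw [hcd, ← he, WittVector.verschiebung_frobenius, pow_succ]
      ring

lemma haus [PerfectRing k p] (z : W) (h : ∀ s, (p : W) ^ s ∣ z) : z = 0 := by
  apply WittVector.ext
  intro n
  rw [WittVector.zero_coeff]
  exact (pPow_dvd_iff p (n+1) z).mp (h (n+1)) n (by omega)

lemma not_isUnit_p : ¬ IsUnit ((p : ℕ) : W) := (WittVector.irreducible p).not_isUnit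

lemma dvd_sub_iff [PerfectRing k p] (s : ℕ) (a b : W) :
    (p : W) ^ s ∣ a - b ↔ ∀ i < s, a.coeff i = b.coeff i := by
  rw [pPow_dvd_iff]
  constructor
  · intro h i hi
    have hker : a - b ∈ RingHom.ker (WittVector.truncate (p := p) s) :=
      (WittVector.mem_ker_truncate _ _).mpr h
    rw [RingHom.mem_ker, map_sub, sub_eq_zero] at hker
    have := congrArg (fun x => TruncatedWittVector.coeff (⟨i, hi⟩ : Fin s) x) hker
    simpa using this
  · intro h
    have hker : WittVector.truncate (p := p) s a = WittVector.truncate (p := p) s b := by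
      apply TruncatedWittVector.ext
      intro i
      simp only [WittVector.coeff_truncate]
      exact h i i.isLt
    have : a - b ∈ RingHom.ker (WittVector.truncate (p := p) s) := by
      rw [RingHom.mem_ker, map_sub, sub_eq_zero, hker]
    exact (WittVector.mem_ker_truncate _ _).mp this

lemma lim [PerfectRing k p] (f : ℕ → W) (hf : ∀ s u, s ≤ u → (p : W) ^ s ∣ f u - f s) :
    ∃ L, ∀ s, (p : W) ^ s ∣ L - f s := by
  refine ⟨WittVector.mk p (fun i => (f (i+1)).coeff i), fun s => ?_⟩
  rw [dvd_sub_iff]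
  intro i hi
  rw [WittVector.coeff_mk]
  have h2 := hf (i+1) s (by omega)
  rw [dvd_sub_iff] at h2
  exact (h2 i (by omega)).symm

end Stmt5Aux
namespace Stmt5T

variable {I : Type*} [Fintype I] (δ : Equiv.Perm I) (m : I → ℤ)

noncomputable def T (j : I) (r : ℕ) : ℤ := ∑ a ∈ Finset.Icc 1 r, m ((δ⁻¹ ^ a) j)

lemma T_zero (j : I) : T δ m j 0 = 0 := by simp [T]

lemma T_succ_top (j : I) (r : ℕ) :
    T δ m j (r + 1) = T δ m j r + m ((δ⁻¹ ^ (r+1)) j) := by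
  rw [T, T, Finset.sum_Icc_succ_top (by omega)]

lemma pow_succ_apply (j : I) (r : ℕ) : (δ⁻¹ ^ (r+1)) j = (δ⁻¹ ^ r) (δ⁻¹ j) := by
  rw [pow_succ, Equiv.Perm.mul_apply]

lemma T_succ_head (j : I) (r : ℕ) :
    T δ m j (r + 1) = m (δ⁻¹ j) + T δ m (δ⁻¹ j) r := by
  induction r with
  | zero => simp [T]
  | succ r ih =>
      rw [T_succ_top, ih, T_succ_top, pow_succ_apply]
      ring

lemma T_add (j : I) (a s : ℕ) :
    T δ m j (a + s) = T δ m j a + T δ m ((δ⁻¹ ^ a) j) s := by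
  induction a generalizing j with
  | zero => simp [T_zero]
  | succ a ih =>
      have h1 : a + 1 + s = (a + s) + 1 := by ring
      rw [h1, T_succ_head, ih, T_succ_head, pow_succ_apply]
      ring

lemma T_one (j : I) : T δ m j 1 = m (δ⁻¹ j) := by
  simpa [T_zero] using T_succ_head δ m j 0

lemma T_le (hm1 : ∀ i, m i ≤ 1) (j : I) (r : ℕ) : T δ m j r ≤ r := by
  calc T δ m j r ≤ ∑ _a ∈ Finset.Icc 1 r, 1 := Finset.sum_le_sum (fun a _ => hm1 _)
  _ = r := by simp
lemma inv_pow_orderOf (j : I) : (δ⁻¹ ^ (orderOf δ)) j = j := by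
  rw [inv_pow, pow_orderOf_eq_one, inv_one, Equiv.Perm.one_apply]

lemma exists_pos_fixed (j : I) : ∃ c, 0 < c ∧ (δ⁻¹ ^ c) j = j :=
  ⟨orderOf δ, orderOf_pos δ, inv_pow_orderOf δ j⟩

noncomputable def Lmin (j : I) : ℕ := Nat.find (exists_pos_fixed δ j)

lemma Lmin_pos (j : I) : 0 < Lmin δ j := (Nat.find_spec (exists_pos_fixed δ j)).1

lemma Lmin_fixed (j : I) : (δ⁻¹ ^ (Lmin δ j)) j = j := (Nat.find_spec (exists_pos_fixed δ j)).2

lemma Lmin_min (j : I) : ∀ c, 0 < c → c < Lmin δ j → (δ⁻¹ ^ c) j ≠ j := by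
  intro c hc hlt h
  exact Nat.find_min (exists_pos_fixed δ j) hlt ⟨hc, h⟩

lemma fixed_mul (j : I) (q : ℕ) : (δ⁻¹ ^ (Lmin δ j * q)) j = j := by
  induction q with
  | zero => simp
  | succ q ih =>
      have : Lmin δ j * (q+1) = Lmin δ j * q + Lmin δ j := by ring
      rw [this, pow_add, Equiv.Perm.mul_apply, Lmin_fixed, ih]

lemma injOn_pow (j : I) : Set.InjOn (fun a => (δ⁻¹ ^ a) j) (Finset.range (Lmin δ j)) := by
  have key : ∀ a b, a < b → b < Lmin δ j → (δ⁻¹ ^ a) j = (δ⁻¹ ^ b) j → a = b := by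
    intro a b hab hb h
    have h2 : (δ⁻¹ ^ b) j = (δ⁻¹ ^ a) ((δ⁻¹ ^ (b - a)) j) := by
      rw [← Equiv.Perm.mul_apply, ← pow_add]
      congr 2
      omega
    rw [h2] at h
    have h3 : j = (δ⁻¹ ^ (b - a)) j := (δ⁻¹ ^ a).injective h
    exact absurd h3.symm (Lmin_min δ j (b - a) (by omega) (by omega))
  intro a ha b hb h
  simp only [Finset.coe_range, Set.mem_Iio] at ha hb
  rcases lt_trichotomy a b with h1 | h1 | h1
  · exact key a b h1 hb h
  · exact h1
  · exact (key b a h1 ha h.symm).symm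

lemma Lmin_le_card (j : I) : Lmin δ j ≤ Fintype.card I := by
  have := Finset.card_le_card_of_injOn (fun a => (δ⁻¹ ^ a) j)
    (fun a _ => Finset.mem_univ _) (injOn_pow δ j)
  simpa using this

lemma orbit_mem (j : I) (a : ℕ) : δ.SameCycle j ((δ⁻¹ ^ a) j) := by
  refine ⟨-(a : ℤ), ?_⟩
  rw [zpow_neg, zpow_natCast, ← inv_pow]

lemma orbit_surj (j i' : I) (h : δ.SameCycle j i') :
    ∃ a ∈ Finset.range (Lmin δ j), (δ⁻¹ ^ a) j = i' := by
  obtain ⟨z, hz⟩ := h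
  set L := Lmin δ j with hL
  have hL0 : 0 < (L : ℤ) := by exact_mod_cast Lmin_pos δ j
  set r : ℤ := (-z) % (L : ℤ) with hr
  have hr0 : 0 ≤ r := Int.emod_nonneg _ (by omega)
  have hrL : r < L := Int.emod_lt_of_pos _ hL0
  set q : ℤ := (-z) / (L : ℤ) with hq
  have hdiv : (L : ℤ) * q + r = -z := Int.mul_ediv_add_emod (-z) (L : ℤ)
  refine ⟨r.toNat, Finset.mem_range.mpr (by omega), ?_⟩
  have hfix : ∀ w : ℤ, (δ ^ ((L : ℤ) * w)) j = j := by
    intro w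
    have h1 : (δ ^ (L : ℤ)) j = j := by
      have h2 := Lmin_fixed δ j
      rw [zpow_natCast]
      conv_lhs => rw [← h2]
      rw [← Equiv.Perm.mul_apply, inv_pow]
      simp
      exact Equiv.apply_symm_apply (δ ^ Lmin δ j) j
    have : Function.IsFixedPt (δ ^ (L : ℤ)) j := h1
    have h3 := this.perm_zpow w
    rwa [← zpow_mul] at h3
  have key : (δ ^ (-r)) j = i' := by
    have h4 : (δ ^ (-r)) j = (δ ^ (-r)) ((δ ^ ((L:ℤ) * (-q))) j) := by rw [hfix]
    rw [← Equiv.Perm.mul_apply, ← zpow_add] at h4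
    have h5 : -r + (L:ℤ) * (-q) = z := by
      have : (L:ℤ) * q + r = -z := hdiv
      linarith
    rw [h5, hz] at h4
    exact h4
  rw [← key]
  have : δ⁻¹ ^ r.toNat = δ ^ (-r) := by
    rw [inv_pow, ← zpow_natCast δ, Int.toNat_of_nonneg hr0, ← zpow_neg]
  rw [this]

lemma orbit_sum (f : I → ℤ) (j : I) :
    ∑ a ∈ Finset.range (Lmin δ j), f ((δ⁻¹ ^ a) j)
      = ∑ i ∈ Finset.univ.filter (fun i => δ.SameCycle j i), f i := by
  refine Finset.sum_bij (fun a _ => (δ⁻¹ ^ a) j) ?_ ?_ ?_ ?_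
  · intro a ha
    exact Finset.mem_filter.mpr ⟨Finset.mem_univ _, orbit_mem δ j a⟩
  · intro a ha b hb h
    exact injOn_pow δ j (by simpa using ha) (by simpa using hb) h
  · intro i' hi'
    obtain ⟨a, ha, h⟩ := orbit_surj δ j i' (Finset.mem_filter.mp hi').2
    exact ⟨a, ha, h⟩
  · intro a ha
    rfl

lemma T_Lmin (j : I) :
    T δ m j (Lmin δ j) = ∑ i ∈ Finset.univ.filter (fun i => δ.SameCycle j i), m i := by
  set L := Lmin δ j with hL
  set f : ℕ → ℤ := fun a => m ((δ⁻¹ ^ a) j) with hf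
  have h1 : ∑ a ∈ Finset.range (L+1), f a = ∑ a ∈ Finset.range L, f a + f L :=
    Finset.sum_range_succ _ _
  have h2 : ∑ a ∈ Finset.range (L+1), f a = (∑ a ∈ Finset.range L, f (a+1)) + f 0 :=
    Finset.sum_range_succ' _ _
  have h3 : f L = f 0 := by
    simp only [hf, pow_zero, Equiv.Perm.one_apply]
    rw [Lmin_fixed]
  have h4 : T δ m j L = ∑ a ∈ Finset.range L, f (a + 1) := by
    rw [T, ← Finset.Ico_add_one_right_eq_Icc, Finset.sum_Ico_eq_sum_range]
    simp only [Nat.add_sub_cancel]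
    refine Finset.sum_congr rfl (fun a _ => ?_)
    simp only [hf]
    rw [Nat.add_comm 1 a]
  have h5 : ∑ a ∈ Finset.range L, f (a+1) = ∑ a ∈ Finset.range L, f a := by omega
  rw [h4, h5]
  exact orbit_sum δ m j

lemma T_mul_L (j : I) (q : ℕ) : T δ m j (Lmin δ j * q) = q * T δ m j (Lmin δ j) := by
  induction q with
  | zero => simp [T_zero]
  | succ q ih =>
      have h1 : Lmin δ j * (q + 1) = Lmin δ j * q + Lmin δ j := by ring
      rw [h1, T_add, fixed_mul, ih]
      push_cast
      ring

lemma T_cap (hm1 : ∀ i, m i ≤ 1)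
    (horb : ∀ j : I, ∑ i ∈ Finset.univ.filter (fun i => δ.SameCycle j i), m i < 0)
    (j : I) (c : ℕ) (hc : Fintype.card I * Fintype.card I + Fintype.card I < c) :
    T δ m j c ≤ 0 := by
  set N := Fintype.card I with hN
  set L := Lmin δ j with hL
  have hL0 : 0 < L := Lmin_pos δ j
  have hLN : L ≤ N := Lmin_le_card δ j
  have hN0 : 0 < N := lt_of_lt_of_le hL0 hLN
  set q : ℕ := c / L with hq
  set s : ℕ := c % L with hs
  have hcs : c = L * q + s := (Nat.div_add_mod c L).symm
  have hTL : T δ m j L ≤ -1 := by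
    have h9 := horb j
    rw [← T_Lmin, ← hL] at h9
    omega
  have hsplit : T δ m j c = (q : ℤ) * T δ m j L + T δ m ((δ⁻¹ ^ (L * q)) j) s := by
    rw [hcs, T_add, T_mul_L]
  have hfix : (δ⁻¹ ^ (L * q)) j = j := fixed_mul δ j q
  rw [hfix] at hsplit
  have hTs : T δ m j s ≤ (s : ℤ) := T_le δ m hm1 j s
  have hsN : s < L := Nat.mod_lt _ hL0
  have hqN : N + 1 ≤ q := by
    have h6 : N * N + N + 1 ≤ c := by omega
    have h7 : c / N ≤ c / L := Nat.div_le_div_left hLN hL0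
    have h8 : N + 1 ≤ c / N := by
      rw [Nat.le_div_iff_mul_le hN0]
      nlinarith
    omega
  have hmul : (q : ℤ) * T δ m j L ≤ (q : ℤ) * (-1) := by
    apply mul_le_mul_of_nonneg_left hTL (by positivity)
  have c1 : (N : ℤ) + 1 ≤ (q : ℤ) := by exact_mod_cast hqN
  have c2 : (s : ℤ) < (L : ℤ) := by exact_mod_cast hsN
  have c3 : (L : ℤ) ≤ (N : ℤ) := by exact_mod_cast hLN
  rw [hsplit]
  linarith

end Stmt5T

namespace Stmt5Main
open Stmt5T Stmt5Aux

variable {p : ℕ} [hp : Fact p.Prime] {k : Type*} [Field k] [CharP k p] [PerfectRing k p]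
variable {I : Type*} [Fintype I] (δ : Equiv.Perm I) (m : I → ℤ)

local notation "W" => WittVector p k

lemma pow_succ_apply' (j : I) (r : ℕ) : (δ⁻¹ ^ (r+1)) j = δ⁻¹ ((δ⁻¹ ^ r) j) := by
  rw [pow_succ', Equiv.Perm.mul_apply]

lemma dvd_of_dvd_frobenius (c : ℕ) (v : WittVector p k)
    (h : (p : W) ^ c ∣ WittVector.frobenius v) : (p : W) ^ c ∣ v := by
  obtain ⟨u, hu⟩ := h
  have h2 : v = (WittVector.frobeniusEquiv p k).symm (WittVector.frobenius v) := by
    rw [← WittVector.frobeniusEquiv_apply, RingEquiv.symm_apply_apply]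
  rw [h2, hu, map_mul, map_pow, map_natCast]
  exact Dvd.intro _ rfl

lemma teichmuller_isUnit {c : k} (hc : c ≠ 0) : IsUnit (WittVector.teichmuller p c : W) := by
  apply IsUnit.of_mul_eq_one (WittVector.teichmuller p c⁻¹)
  rw [← MonoidHom.map_mul, mul_inv_cancel₀ hc, MonoidHom.map_one]

lemma stmt5_mp (hm : ∀ j, m j = -1 ∨ m j = 0 ∨ m j = 1)
    (ε : I → (WittVector p k)ˣ) (t : I → k)
    (ht : ∀ j, m j ≠ -1 → t j = 0) (x : I → WittVector p k)
    (hx : ∀ j : I,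
        (p : W) * WittVector.teichmuller p (t j)
          = -(p : W) * x j
            + (p : W) ^ (1 + m (δ⁻¹ j)).toNat * (ε j : W)
              * WittVector.frobenius (x (δ⁻¹ j))) :
    ∀ r : ℕ, ∀ j : I, t j ≠ 0 → 1 ≤ T δ m j r → False := by
  intro r
  induction r using Nat.strong_induction_on with
  | _ r IH =>
  intro j htj hTr
  have hmj : m j = -1 := by
    by_contra h
    exact htj (ht j h)
  by_cases hmin : ∀ r' < r, T δ m j r' ≤ 0
  swap
  · push_neg at hmin
    obtain ⟨r', hr', hT'⟩ := hmin
    exact IH r' hr' j htj (by omega)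
  have hr0 : 0 < r := by
    rcases Nat.eq_zero_or_pos r with h | h
    · subst h; rw [T_zero] at hTr; omega
    · exact h
  -- downward induction
  have key : ∀ d a, 1 ≤ a → a + d = r →
      (p : W) ^ ((1 - T δ m j a).toNat) ∣ x ((δ⁻¹ ^ a) j) := by
    intro d
    induction d with
    | zero =>
        intro a ha1 har
        have haa : a = r := by omega
        subst haa
        have h0 : (1 - T δ m j a).toNat = 0 := by omega
        rw [h0, pow_zero]
        exact one_dvd _
    | succ d ihd =>
        intro a ha1 har
        obtain ⟨u, hu⟩ := ihd (a+1) (by omega) (by omega)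
        set i := (δ⁻¹ ^ a) j with hi
        have hieq : (δ⁻¹ ^ (a+1)) j = δ⁻¹ i := by rw [pow_succ_apply']
        have heq := hx i
        -- exponents
        have hTa : T δ m j a ≤ 0 := hmin a (by omega)
        have hm' : -1 ≤ m (δ⁻¹ i) := by rcases hm (δ⁻¹ i) with h | h | h <;> omega
        have hTstep : T δ m j (a+1) = T δ m j a + m (δ⁻¹ i) := by
          rw [T_succ_top, hieq]
        set ca := (1 - T δ m j a).toNat with hca
        set c' := (1 - T δ m j (a+1)).toNat with hc'
        set e := (1 + m (δ⁻¹ i)).toNat with he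
        have hcaZ : (ca : ℤ) = 1 - T δ m j a := Int.toNat_of_nonneg (by omega)
        have heZ : (e : ℤ) = 1 + m (δ⁻¹ i) := Int.toNat_of_nonneg (by omega)
        have hc'Z : (1 - T δ m j (a+1)) ≤ (c' : ℤ) := Int.self_le_toNat _
        have hle : 1 + ca ≤ e + c' := by
          have : ((1 + ca : ℕ) : ℤ) ≤ ((e + c' : ℕ) : ℤ) := by push_cast; omega
          exact_mod_cast this
        -- p^(1+ca) divides p * (τ + x i)
        have hdvd2 : (p : W) ^ (1 + ca) ∣
            (p : W) * (WittVector.teichmuller p (t i) + x i) := by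
          have hrhs : (p : W) * (WittVector.teichmuller p (t i) + x i)
              = (p : W) ^ (e + c') * ((ε i : W) * WittVector.frobenius u) := by
            have hF : WittVector.frobenius (x (δ⁻¹ i))
                = (p : W) ^ c' * WittVector.frobenius u := by
              rw [← hieq, hu, map_mul, map_pow, map_natCast]
            rw [pow_add]
            calc (p : W) * (WittVector.teichmuller p (t i) + x i)
                = (p : W) * WittVector.teichmuller p (t i) + (p : W) * x i := by ring
              _ = (p : W) ^ e * (ε i : W) * WittVector.frobenius (x (δ⁻¹ i)) := by
                  rw [heq]; ring
              _ = (p : W) ^ e * (p : W) ^ c' * ((ε i : W) * WittVector.frobenius u) := by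
                  rw [hF]; ring
          rw [hrhs]
          exact Dvd.dvd.mul_right (pow_dvd_pow _ hle) _
        have hdvd3 : (p : W) ^ ca ∣ WittVector.teichmuller p (t i) + x i := by
          have hp0 : (p : W) ≠ 0 := WittVector.p_nonzero p k
          rw [add_comm 1 ca, pow_succ'] at hdvd2
          exact (mul_dvd_mul_iff_left hp0).mp hdvd2
        by_cases hti : t i = 0
        · rw [hti, WittVector.teichmuller_zero, zero_add] at hdvd3
          exact hdvd3
        · exfalso
          have hshift : T δ m i (r - a) = T δ m j r - T δ m j a := by
            have := T_add δ m j a (r - a)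
            rw [show a + (r - a) = r by omega] at this
            rw [← hi] at this
            omega
          exact IH (r - a) (by omega) i hti (by omega)
  -- final step
  obtain ⟨u, hu⟩ := key (r - 1) 1 le_rfl (by omega)
  rw [pow_one] at hu
  -- p^2 divides p * (τ j + x j)
  have heq := hx j
  have hm1 : -1 ≤ m (δ⁻¹ j) := by rcases hm (δ⁻¹ j) with h | h | h <;> omega
  set c1 := (1 - T δ m j 1).toNat with hc1
  set e := (1 + m (δ⁻¹ j)).toNat with he
  have heZ : (e : ℤ) = 1 + m (δ⁻¹ j) := Int.toNat_of_nonneg (by omega)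
  have hc1Z : 1 - T δ m j 1 ≤ (c1 : ℤ) := Int.self_le_toNat _
  have hT1 : T δ m j 1 = m (δ⁻¹ j) := T_one δ m j
  have hle : 2 ≤ e + c1 := by
    have : ((2 : ℕ) : ℤ) ≤ ((e + c1 : ℕ) : ℤ) := by push_cast; omega
    exact_mod_cast this
  have hdvd2 : (p : W) ^ 2 ∣ (p : W) * (WittVector.teichmuller p (t j) + x j) := by
    have hrhs : (p : W) * (WittVector.teichmuller p (t j) + x j)
        = (p : W) ^ (e + c1) * ((ε j : W) * WittVector.frobenius u) := by
      have hF : WittVector.frobenius (x (δ⁻¹ j))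
          = (p : W) ^ c1 * WittVector.frobenius u := by
        rw [hu, map_mul, map_pow, map_natCast]
      rw [pow_add]
      calc (p : W) * (WittVector.teichmuller p (t j) + x j)
          = (p : W) * WittVector.teichmuller p (t j) + (p : W) * x j := by ring
        _ = (p : W) ^ e * (ε j : W) * WittVector.frobenius (x (δ⁻¹ j)) := by
            rw [heq]; ring
        _ = (p : W) ^ e * (p : W) ^ c1 * ((ε j : W) * WittVector.frobenius u) := by
            rw [hF]; ring
    rw [hrhs]
    exact Dvd.dvd.mul_right (pow_dvd_pow _ hle) _
  have hdvd3 : (p : W) ∣ WittVector.teichmuller p (t j) + x j := by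
    have hp0 : (p : W) ≠ 0 := WittVector.p_nonzero p k
    rw [pow_two] at hdvd2
    exact (mul_dvd_mul_iff_left hp0).mp hdvd2
  -- p divides x j, from the equation at δ j
  have hdvdx : (p : W) ∣ x j := by
    have heqd := hx (δ j)
    rw [show δ⁻¹ (δ j) = j from Equiv.symm_apply_apply δ j, hmj] at heqd
    have h0 : ((1 + (-1 : ℤ)).toNat) = 0 := rfl
    rw [h0, pow_zero, one_mul] at heqd
    have hunit : (ε (δ j) : W) * WittVector.frobenius (x j)
        = (p : W) * (WittVector.teichmuller p (t (δ j)) + x (δ j)) := by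
      linear_combination -heqd
    have hF : WittVector.frobenius (x j)
        = (p : W) * ((((ε (δ j))⁻¹ : (WittVector p k)ˣ) : W) * (WittVector.teichmuller p (t (δ j)) + x (δ j))) := by
      have h3 := congrArg (fun z => (((ε (δ j))⁻¹ : (WittVector p k)ˣ) : W) * z) hunit
      rw [Units.inv_mul_cancel_left] at h3
      rw [h3]
      ring
    have h4 : (p : W) ^ 1 ∣ WittVector.frobenius (x j) := by
      rw [pow_one, hF]
      exact Dvd.intro _ rfl
    have h5 := dvd_of_dvd_frobenius 1 (x j) h4
    rwa [pow_one] at h5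
  have hdvdtau : (p : W) ∣ WittVector.teichmuller p (t j) := by
    have h6 := hdvd3.sub hdvdx
    rwa [add_sub_cancel_right] at h6
  exact not_isUnit_p p (isUnit_of_dvd_unit hdvdtau (teichmuller_isUnit htj))

lemma stmt5_mpr (hm : ∀ j, m j = -1 ∨ m j = 0 ∨ m j = 1)
    (horb : ∀ j : I, ∑ i ∈ Finset.univ.filter (fun i => δ.SameCycle j i), m i < 0)
    (ε : I → (WittVector p k)ˣ) (t : I → k)
    (hC : ∀ j, t j ≠ 0 → ∀ r : ℕ, 1 ≤ r → T δ m j r ≤ 0) :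
    ∃ x : I → WittVector p k, ∀ j : I,
        (p : W) * WittVector.teichmuller p (t j)
          = -(p : W) * x j
            + (p : W) ^ (1 + m (δ⁻¹ j)).toNat * (ε j : W)
              * WittVector.frobenius (x (δ⁻¹ j)) := by
  have hm1 : ∀ i, m i ≤ 1 := by intro i; rcases hm i with h | h | h <;> omega
  have hmneg : ∀ i, -1 ≤ m i := by intro i; rcases hm i with h | h | h <;> omega
  set N := Fintype.card I with hN
  set K := N * N + N with hK
  set w : I → ℕ := fun j => (Finset.Icc 1 K).sup (fun c => (T δ m j c).toNat) with hw
  have hcap : ∀ (j : I) (c : ℕ), K < c → T δ m j c ≤ 0 := fun j c hc =>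
    T_cap δ m hm1 horb j c hc
  have hwge : ∀ (j : I) (c : ℕ), 1 ≤ c → c ≤ K → T δ m j c ≤ (w j : ℤ) := by
    intro j c h1 h2
    have h3 : (T δ m j c).toNat ≤ w j := by
      simp only [hw]
      exact Finset.le_sup (f := fun c => (T δ m j c).toNat) (Finset.mem_Icc.mpr ⟨h1, h2⟩)
    have h4 := Int.self_le_toNat (T δ m j c)
    have h5 : ((T δ m j c).toNat : ℤ) ≤ (w j : ℤ) := by exact_mod_cast h3
    omega
  have hKpos : ∀ _j : I, 1 ≤ K := by
    intro j
    have : 0 < N := Fintype.card_pos_iff.mpr ⟨j⟩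
    omega
  have hw1K : ∀ j : I, m (δ⁻¹ j) = 1 → 1 ≤ w j := by
    intro j hmj
    have h1 : T δ m j 1 = 1 := by rw [T_one, hmj]
    have h2 : (T δ m j 1).toNat ≤ w j := by
      simp only [hw]
      exact Finset.le_sup (f := fun c => (T δ m j c).toNat)
        (Finset.mem_Icc.mpr ⟨le_rfl, hKpos j⟩)
    rw [h1] at h2
    exact h2
  have hW1 : ∀ j : I, m (δ⁻¹ j) + (w (δ⁻¹ j) : ℤ) ≤ (w j : ℤ) := by
    intro j
    have hB0 : 0 ≤ (w j : ℤ) - m (δ⁻¹ j) := by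
      rcases hm (δ⁻¹ j) with h | h | h
      · have : (0:ℤ) ≤ (w j : ℤ) := Int.natCast_nonneg _
        omega
      · have : (0:ℤ) ≤ (w j : ℤ) := Int.natCast_nonneg _
        omega
      · have := hw1K j h
        have h2 : (1:ℤ) ≤ (w j : ℤ) := by exact_mod_cast this
        omega
    have hsup : w (δ⁻¹ j) ≤ ((w j : ℤ) - m (δ⁻¹ j)).toNat := by
      apply Finset.sup_le
      intro c hc
      rw [Finset.mem_Icc] at hc
      apply Int.toNat_le_toNat
      have hTs : T δ m j (c+1) = m (δ⁻¹ j) + T δ m (δ⁻¹ j) c := T_succ_head δ m j c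
      by_cases hcK : c + 1 ≤ K
      · have := hwge j (c+1) (by omega) hcK
        omega
      · have := hcap j (c+1) (by omega)
        have h6 : (0:ℤ) ≤ (w j : ℤ) := Int.natCast_nonneg _
        omega
    have h7 : ((w (δ⁻¹ j) : ℤ)) ≤ (((w j : ℤ) - m (δ⁻¹ j)).toNat : ℤ) := by exact_mod_cast hsup
    rw [Int.toNat_of_nonneg hB0] at h7
    omega
  have hW0 : ∀ j : I, t j ≠ 0 → w j = 0 := by
    intro j htj
    have : w j ≤ 0 := by
      apply Finset.sup_le
      intro c hc
      rw [Finset.mem_Icc] at hc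
      have := hC j htj c hc.1
      omega
    omega
  set A : I → ℤ := fun i => (w (δ i) : ℤ) - m i - (w i : ℤ) with hA
  have hA0 : ∀ i, 0 ≤ A i := by
    intro i
    have := hW1 (δ i)
    rw [show δ⁻¹ (δ i) = i from Equiv.symm_apply_apply δ i] at this
    simp only [hA]
    omega
  have hAorb : ∀ i : I, ∃ i', δ.SameCycle i i' ∧ 1 ≤ A i' := by
    intro i
    set O := Finset.univ.filter (fun i' => δ.SameCycle i i') with hO
    have hmem : ∀ i' ∈ O, δ i' ∈ O := by
      intro i' hi'
      rw [hO, Finset.mem_filter] at hi' ⊢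
      exact ⟨Finset.mem_univ _, hi'.2.apply_right⟩
    have hmem' : ∀ i' ∈ O, δ⁻¹ i' ∈ O := by
      intro i' hi'
      rw [hO, Finset.mem_filter] at hi' ⊢
      refine ⟨Finset.mem_univ _, ?_⟩
      exact (Equiv.Perm.sameCycle_symm_apply_right).mpr hi'.2
    have hsumw : ∑ i' ∈ O, (w (δ i') : ℤ) = ∑ i' ∈ O, (w i' : ℤ) := by
      apply Finset.sum_nbij' (fun i' => δ i') (fun i' => δ⁻¹ i')
      · exact hmem
      · exact hmem'
      · intro i' _; exact Equiv.symm_apply_apply δ i'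
      · intro i' _; exact Equiv.apply_symm_apply δ i'
      · intro i' _; rfl
    have hS : ∑ i' ∈ O, A i' = - ∑ i' ∈ O, m i' := by
      simp only [hA]
      rw [Finset.sum_sub_distrib, Finset.sum_sub_distrib, hsumw]
      ring
    have hneg : ∑ i' ∈ O, m i' < 0 := horb i
    by_contra hcon
    push_neg at hcon
    have : ∑ i' ∈ O, A i' ≤ 0 := by
      apply Finset.sum_nonpos
      intro i' hi'
      rw [hO, Finset.mem_filter] at hi'
      have := hcon i' hi'.2
      omega
    omega
  set n := orderOf δ with hn
  have hn0 : 0 < n := orderOf_pos δ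
  set σ := WittVector.frobeniusEquiv p k with hσ
  set Φ : (I → W) → (I → W) := fun y i =>
    σ.symm ((((ε (δ i))⁻¹ : (WittVector p k)ˣ) : W) *
      ((p : W) ^ ((-(m i) - (w i : ℤ)).toNat) * WittVector.teichmuller p (t (δ i))
        + (p : W) ^ ((A i).toNat) * y (δ i))) with hΦ
  have hD1 : ∀ (y y' : I → W) (i : I) (c : ℕ),
      (p : W) ^ c ∣ y (δ i) - y' (δ i) →
      (p : W) ^ ((A i).toNat + c) ∣ Φ y i - Φ y' i := by
    intro y y' i c hdvd
    obtain ⟨d, hd⟩ := hdvd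
    refine ⟨σ.symm ((((ε (δ i))⁻¹ : (WittVector p k)ˣ) : W) * d), ?_⟩
    simp only [hΦ]
    rw [← map_sub]
    have harg : (((ε (δ i))⁻¹ : (WittVector p k)ˣ) : W) *
      ((p : W) ^ ((-(m i) - (w i : ℤ)).toNat) * WittVector.teichmuller p (t (δ i))
        + (p : W) ^ ((A i).toNat) * y (δ i))
      - (((ε (δ i))⁻¹ : (WittVector p k)ˣ) : W) *
      ((p : W) ^ ((-(m i) - (w i : ℤ)).toNat) * WittVector.teichmuller p (t (δ i))
        + (p : W) ^ ((A i).toNat) * y' (δ i))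
      = (p : W) ^ ((A i).toNat + c) * ((((ε (δ i))⁻¹ : (WittVector p k)ˣ) : W) * d) := by
      rw [pow_add]
      linear_combination ((((ε (δ i))⁻¹ : (WittVector p k)ˣ) : W) * (p : W) ^ ((A i).toNat)) * hd
    rw [harg, map_mul, map_pow, map_natCast]
  have hIter : ∀ (q : ℕ) (y y' : I → W) (c : ℕ),
      (∀ i, (p : W) ^ c ∣ y i - y' i) →
      ∀ i, (p : W) ^ (c + ∑ b ∈ Finset.range q, (A ((δ ^ b) i)).toNat)
        ∣ (Φ^[q] y) i - (Φ^[q] y') i := by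
    intro q
    induction q with
    | zero =>
        intro y y' c h i
        simpa using h i
    | succ q ihq =>
        intro y y' c h i
        rw [Function.iterate_succ_apply', Function.iterate_succ_apply']
        have h2 := hD1 (Φ^[q] y) (Φ^[q] y') i
          (c + ∑ b ∈ Finset.range q, (A ((δ ^ b) (δ i))).toNat) (ihq y y' c h (δ i))
        have hexp : (A i).toNat + (c + ∑ b ∈ Finset.range q, (A ((δ ^ b) (δ i))).toNat)
            = c + ∑ b ∈ Finset.range (q+1), (A ((δ ^ b) i)).toNat := by
          have hs := Finset.sum_range_succ' (fun b => (A ((δ ^ b) i)).toNat) q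
          have hterm : ∀ b, (A ((δ ^ (b+1)) i)).toNat = (A ((δ ^ b) (δ i))).toNat := by
            intro b; rw [pow_succ, Equiv.Perm.mul_apply]
          simp only [pow_zero, Equiv.Perm.one_apply, hterm] at hs
          omega
        rw [← hexp]
        exact h2
  have hG1 : ∀ i : I, 1 ≤ ∑ b ∈ Finset.range n, (A ((δ ^ b) i)).toNat := by
    intro i
    obtain ⟨i', hsc, hA1⟩ := hAorb i
    obtain ⟨z, hz⟩ := hsc
    have h1 : 0 ≤ z % (n : ℤ) := Int.emod_nonneg z (by exact_mod_cast hn0.ne')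
    have h2 : z % (n : ℤ) < (n : ℤ) := Int.emod_lt_of_pos z (by exact_mod_cast hn0)
    have hbi : (δ ^ ((z % (n : ℤ)).toNat)) i = i' := by
      have h3 : (δ ^ (((z % (n : ℤ)).toNat : ℕ) : ℤ)) i = i' := by
        rw [Int.toNat_of_nonneg h1, hn, zpow_mod_orderOf, hz]
      rw [← zpow_natCast]
      exact h3
    have hmem : (z % (n : ℤ)).toNat ∈ Finset.range n := by
      rw [Finset.mem_range]; omega
    calc 1 ≤ (A ((δ ^ ((z % (n : ℤ)).toNat)) i)).toNat := by rw [hbi]; omega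
    _ ≤ ∑ b ∈ Finset.range n, (A ((δ ^ b) i)).toNat :=
        Finset.single_le_sum (f := fun b => (A ((δ ^ b) i)).toNat)
          (fun _ _ => Nat.zero_le _) hmem
  set Ψ := Φ^[n] with hΨ
  have hPN : ∀ (y y' : I → W) (c : ℕ), (∀ i, (p : W) ^ c ∣ y i - y' i) →
      ∀ i, (p : W) ^ (c+1) ∣ Ψ y i - Ψ y' i := by
    intro y y' c h i
    have h3 := hIter n y y' c h i
    exact dvd_trans (pow_dvd_pow _ (by have := hG1 i; omega)) h3
  set Y : ℕ → I → W := fun s => Ψ^[s] (fun _ => 0) with hY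
  have hY1 : ∀ s : ℕ, ∀ i : I, (p : W) ^ s ∣ Y (s+1) i - Y s i := by
    intro s
    induction s with
    | zero => intro i; simpa using one_dvd _
    | succ s ihs =>
        intro i
        have e1 : Y (s+2) = Ψ (Y (s+1)) := Function.iterate_succ_apply' Ψ (s+1) _
        have e2 : Y (s+1) = Ψ (Y s) := Function.iterate_succ_apply' Ψ s _
        rw [e1, e2]
        exact hPN (Ψ (Y s)) (Y s) s (fun i' => by rw [← e2]; exact ihs i') i
  have hY2 : ∀ s u : ℕ, s ≤ u → ∀ i : I, (p : W) ^ s ∣ Y u i - Y s i := by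
    intro s u h
    induction u, h using Nat.le_induction with
    | base => intro i; simp
    | succ u hu ih =>
        intro i
        have h4 : Y (u+1) i - Y s i = (Y (u+1) i - Y u i) + (Y u i - Y s i) := by ring
        rw [h4]
        exact dvd_add (dvd_trans (pow_dvd_pow _ hu) (hY1 u i)) (ih i)
  have hlim : ∀ i : I, ∃ L : W, ∀ s, (p : W) ^ s ∣ L - Y s i := by
    intro i
    exact Stmt5Aux.lim p (fun s => Y s i) (fun s u h => hY2 s u h i)
  choose yf hyf using hlim
  have hfixΨ : ∀ i, Ψ yf i = yf i := by
    intro i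
    have hz : ∀ s, (p : W) ^ s ∣ Ψ yf i - yf i := by
      intro s
      have h1 : (p : W) ^ (s+1) ∣ Ψ yf i - Ψ (Y s) i :=
        hPN yf (Y s) s (fun i' => hyf i' s) i
      have h2 : Ψ (Y s) = Y (s+1) := (Function.iterate_succ_apply' Ψ s _).symm
      have h3 : (p : W) ^ (s+1) ∣ yf i - Y (s+1) i := hyf i (s+1)
      have h5 : Ψ yf i - yf i = (Ψ yf i - Ψ (Y s) i) - (yf i - Y (s+1) i) := by
        rw [h2]; ring
      rw [h5]
      exact dvd_sub (dvd_trans (pow_dvd_pow _ (Nat.le_succ s)) h1)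
        (dvd_trans (pow_dvd_pow _ (Nat.le_succ s)) h3)
    exact sub_eq_zero.mp (Stmt5Aux.haus p _ hz)
  have hfixΦ : ∀ i, Φ yf i = yf i := by
    have hfix2 : ∀ i, Ψ (Φ yf) i = Φ yf i := by
      intro i
      have h1 : Ψ (Φ yf) = Φ (Ψ yf) := by
        rw [hΨ, ← Function.iterate_succ_apply, Function.iterate_succ_apply']
      rw [h1, funext hfixΨ]
    have huniq : ∀ s : ℕ, ∀ i, (p : W) ^ s ∣ Φ yf i - yf i := by
      intro s
      induction s with
      | zero => intro i; simpa using one_dvd _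
      | succ s ih =>
          intro i
          have h6 := hPN (Φ yf) yf s ih i
          rw [hfix2 i, hfixΨ i] at h6
          exact h6
    intro i
    exact sub_eq_zero.mp (Stmt5Aux.haus p _ (fun s => huniq s i))
  -- assemble the solution
  refine ⟨fun j => (p : W) ^ (w j) * yf j, ?_⟩
  intro j
  have hji : δ (δ⁻¹ j) = j := Equiv.apply_symm_apply δ j
  have hσy : WittVector.frobenius (yf (δ⁻¹ j))
      = (((ε j)⁻¹ : (WittVector p k)ˣ) : W) *
        ((p : W) ^ ((-(m (δ⁻¹ j)) - (w (δ⁻¹ j) : ℤ)).toNat) * WittVector.teichmuller p (t j)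
          + (p : W) ^ ((A (δ⁻¹ j)).toNat) * yf j) := by
    rw [← WittVector.frobeniusEquiv_apply, ← hσ]
    conv_lhs => rw [← hfixΦ (δ⁻¹ j)]
    rw [hΦ]
    rw [RingEquiv.apply_symm_apply]
    rw [hji]
  have hFx : WittVector.frobenius ((p : W) ^ (w (δ⁻¹ j)) * yf (δ⁻¹ j))
      = (p : W) ^ (w (δ⁻¹ j)) * WittVector.frobenius (yf (δ⁻¹ j)) := by
    rw [map_mul, map_pow, map_natCast]
  rw [hFx, hσy]
  -- now pure algebra
  have hu : (ε j : W) * (((ε j)⁻¹ : (WittVector p k)ˣ) : W) = 1 := by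
    exact_mod_cast (ε j).mul_inv
  have heZ : (((1 + m (δ⁻¹ j)).toNat : ℕ) : ℤ) = 1 + m (δ⁻¹ j) :=
    Int.toNat_of_nonneg (by have := hmneg (δ⁻¹ j); omega)
  have hAZ : (((A (δ⁻¹ j)).toNat : ℕ) : ℤ) = A (δ⁻¹ j) := Int.toNat_of_nonneg (hA0 _)
  have hAval : A (δ⁻¹ j) = (w j : ℤ) - m (δ⁻¹ j) - (w (δ⁻¹ j) : ℤ) := by
    simp only [hA]
    rw [hji]
  have h1 : (p : W) ^ ((1 + m (δ⁻¹ j)).toNat) * (p : W) ^ (w (δ⁻¹ j))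
      * (p : W) ^ ((A (δ⁻¹ j)).toNat) = (p : W) * (p : W) ^ (w j) := by
    rw [← pow_add, ← pow_add, ← pow_succ']
    congr 1
    have : (((1 + m (δ⁻¹ j)).toNat + w (δ⁻¹ j) + (A (δ⁻¹ j)).toNat : ℕ) : ℤ)
        = ((w j + 1 : ℕ) : ℤ) := by
      push_cast
      omega
    exact_mod_cast this
  have h2 : (p : W) ^ ((1 + m (δ⁻¹ j)).toNat) * (p : W) ^ (w (δ⁻¹ j))
      * (p : W) ^ ((-(m (δ⁻¹ j)) - (w (δ⁻¹ j) : ℤ)).toNat) * WittVector.teichmuller p (t j)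
      = (p : W) * WittVector.teichmuller p (t j) := by
    by_cases htj : t j = 0
    · rw [htj, WittVector.teichmuller_zero, mul_zero, mul_zero]
    · have hwj : w j = 0 := hW0 j htj
      have hBZ : (((-(m (δ⁻¹ j)) - (w (δ⁻¹ j) : ℤ)).toNat : ℕ) : ℤ)
          = -(m (δ⁻¹ j)) - (w (δ⁻¹ j) : ℤ) := by
        apply Int.toNat_of_nonneg
        have := hA0 (δ⁻¹ j)
        rw [hAval] at this
        omega
      congr 1
      rw [← pow_add, ← pow_add]
      have hexp1 : ((1 + m (δ⁻¹ j)).toNat + w (δ⁻¹ j)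
          + (-(m (δ⁻¹ j)) - (w (δ⁻¹ j) : ℤ)).toNat) = 1 := by
        have : (((1 + m (δ⁻¹ j)).toNat + w (δ⁻¹ j)
            + (-(m (δ⁻¹ j)) - (w (δ⁻¹ j) : ℤ)).toNat : ℕ) : ℤ) = ((1 : ℕ) : ℤ) := by
          push_cast
          omega
        exact_mod_cast this
      rw [hexp1, pow_one]
  linear_combination (-1 : W) * h2 - yf j * h1
    - ((p : W) ^ ((1 + m (δ⁻¹ j)).toNat) * (p : W) ^ (w (δ⁻¹ j))
      * ((p : W) ^ ((-(m (δ⁻¹ j)) - (w (δ⁻¹ j) : ℤ)).toNat) * WittVector.teichmuller p (t j)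
        + (p : W) ^ ((A (δ⁻¹ j)).toNat) * yf j)) * hu

end Stmt5Main

/-- Let `p` be a prime, `k` algebraically closed of characteristic `p`,
`I` a finite set, `δ` a permutation of `I`, `m : I → ℤ` with values in `{-1,0,1}` and
negative sum on every `δ`-orbit, `ε` a family of Witt-vector units and `t : I → k`
with `t j = 0` whenever `m j ≠ -1`; write `τ_j` for the Teichmüller lift of `t j`.
Set `C = {j | m j = -1 ∧ ∀ r ≥ 1, ∑_{a=1}^r m (δ^{-a} j) ≤ 0}`. Then the system
`p τ_j = -p x_j + p^{1 + m(δ⁻¹ j)} ε_j σ(x_{δ⁻¹ j})` (for all `j`) has a solution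
`x : I → W(k)` if and only if `t j = 0` for all `j ∉ C`. -/
theorem stmt_5 (p : ℕ) [Fact p.Prime] (k : Type*) [Field k] [IsAlgClosed k] [CharP k p]
    (I : Type*) [Fintype I] (δ : Equiv.Perm I)
    (m : I → ℤ) (hm : ∀ j, m j = -1 ∨ m j = 0 ∨ m j = 1)
    (horb : ∀ j : I, ∑ i ∈ Finset.univ.filter (fun i => δ.SameCycle j i), m i < 0)
    (ε : I → (WittVector p k)ˣ) (t : I → k)
    (ht : ∀ j, m j ≠ -1 → t j = 0) :
    (∃ x : I → WittVector p k, ∀ j : I,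
        (p : WittVector p k) * WittVector.teichmuller p (t j)
          = -(p : WittVector p k) * x j
            + (p : WittVector p k) ^ (1 + m (δ⁻¹ j)).toNat * (ε j : WittVector p k)
              * WittVector.frobenius (x (δ⁻¹ j)))
      ↔ ∀ j : I, j ∉ {j : I | m j = -1 ∧ ∀ r : ℕ, 1 ≤ r →
            ∑ a ∈ Finset.Icc 1 r, m ((δ⁻¹ ^ a) j) ≤ 0} → t j = 0 := by
  constructor
  · rintro ⟨x, hx⟩ j hj
    by_contra htj
    have hmj : m j = -1 := by
      by_contra h
      exact htj (ht j h)
    simp only [Set.mem_setOf_eq] at hj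
    push_neg at hj
    obtain ⟨r, hr1, hr⟩ := hj hmj
    exact Stmt5Main.stmt5_mp δ m hm ε t ht x hx r j htj (by
      show (1 : ℤ) ≤ Stmt5T.T δ m j r
      rw [Stmt5T.T]
      omega)
  · intro hvan
    have hC : ∀ j, t j ≠ 0 → ∀ r : ℕ, 1 ≤ r → Stmt5T.T δ m j r ≤ 0 := by
      intro j htj r hr
      have hjC : j ∈ {j : I | m j = -1 ∧ ∀ r : ℕ, 1 ≤ r →
          ∑ a ∈ Finset.Icc 1 r, m ((δ⁻¹ ^ a) j) ≤ 0} := by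
        by_contra hnot
        exact htj (hvan j hnot)
      have := hjC.2 r hr
      rw [Stmt5T.T]
      exact this
    exact Stmt5Main.stmt5_mpr δ m hm horb ε t hC
end
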